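/- arXiv:1502.00885 — 10 statements merged into one kernel-verified Lean document; each statement's English description precedes it below -/
import Mathlib

section
/- Let (ν_n)_{n∈ℕ} be a sequence of Borel probability measures on ℝ such that ν_n((−∞,0)) = 0 for every n, and suppose (ν_n) satisfies the large deviations principle with rate function ψ : ℝ → [0,∞]. Let R be the attainable set of (ν_n). Then R is a nonempty closed subset of [0,∞) and {γ ∈ ℝ : ψ(γ) < ∞} ⊆ R. -/
open MeasureTheory Filter Set
open scoped ENNReal NNReal

/-- A sequence of Borel (probability) measures satisfies the large deviations principle
with rate function `ρ : X → [0,∞]`. -/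
def HasLDP {X : Type*} [TopologicalSpace X] [MeasurableSpace X]
    (ν : ℕ → Measure X) (ρ : X → ℝ≥0∞) : Prop :=
  LowerSemicontinuous ρ ∧
  (∀ F : Set X, IsClosed F →
    Filter.limsup (fun n : ℕ => ((n : ℝ)⁻¹ : EReal) * ENNReal.log (ν n F)) Filter.atTop
      ≤ -(⨅ x ∈ F, (ρ x : EReal))) ∧
  (∀ G : Set X, IsOpen G →
    -(⨅ x ∈ G, (ρ x : EReal)) ≤
      Filter.liminf (fun n : ℕ => ((n : ℝ)⁻¹ : EReal) * ENNReal.log (ν n G)) Filter.atTop)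

/-- The attainable set of a sequence of measures on ℝ. -/
def Attainable (ν : ℕ → Measure ℝ) : Set ℝ :=
  {γ : ℝ | ∀ ε > 0, ∃ N : ℕ, ∀ n ≥ N, 0 < ν n (Set.Ioo (γ - ε) (γ + ε))}

theorem stmt0 (ν : ℕ → Measure ℝ) [∀ n, IsProbabilityMeasure (ν n)]
    (hsupp : ∀ n, ν n (Set.Iio 0) = 0)
    (ψ : ℝ → ℝ≥0∞) (hLDP : HasLDP ν ψ) :
    (Attainable ν).Nonempty ∧ IsClosed (Attainable ν) ∧ Attainable ν ⊆ Set.Ici 0 ∧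
      {γ : ℝ | ψ γ < ⊤} ⊆ Attainable ν := by
  obtain ⟨hlsc, hupper, hlower⟩ := hLDP
  -- ψ < ∞ implies attainable
  have hpsi : {γ : ℝ | ψ γ < ⊤} ⊆ Attainable ν := by
    intro γ hγ ε hε
    by_contra h
    push_neg at h
    set G := Set.Ioo (γ - ε) (γ + ε) with hG
    have hfreq : ∃ᶠ n : ℕ in atTop,
        ((n : ℝ)⁻¹ : EReal) * ENNReal.log (ν n G) ≤ (⊥ : EReal) := by
      rw [frequently_atTop]
      intro N
      obtain ⟨n, hn, hν⟩ := h (max N 1)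
      refine ⟨n, le_trans (le_max_left _ _) hn, ?_⟩
      have hn1 : 1 ≤ n := le_trans (le_max_right _ _) hn
      have hν0 : ν n G = 0 := le_antisymm hν bot_le
      have hpos : (0 : EReal) < ((n : ℝ)⁻¹ : EReal) :=
        EReal.inv_pos_of_pos_ne_top (by exact_mod_cast Nat.pos_of_ne_zero (by omega))
          (by exact_mod_cast EReal.coe_ne_top (n : ℝ))
      rw [hν0, ENNReal.log_zero, EReal.mul_bot_of_pos hpos]
    have hlim : liminf (fun n : ℕ => ((n : ℝ)⁻¹ : EReal) * ENNReal.log (ν n G)) atTop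
        ≤ ⊥ := liminf_le_of_frequently_le' hfreq
    have := (hlower G isOpen_Ioo).trans hlim
    rw [le_bot_iff] at this
    have htop : (⨅ x ∈ G, (ψ x : EReal)) = ⊤ := by
      rw [← neg_neg (⨅ x ∈ G, (ψ x : EReal)), this, EReal.neg_bot]
    have hmem : γ ∈ G := by constructor <;> linarith
    have hle : (⨅ x ∈ G, (ψ x : EReal)) ≤ (ψ γ : EReal) := biInf_le _ hmem
    rw [htop, top_le_iff] at hle
    exact absurd hle (by simpa using hγ.ne)
  -- subset of Ici 0
  have hsub : Attainable ν ⊆ Set.Ici 0 := by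
    intro γ hγ
    by_contra hneg
    have hγ0 : γ < 0 := lt_of_not_ge hneg
    obtain ⟨N, hN⟩ := hγ (-γ) (by linarith)
    have hpos := hN N le_rfl
    have hz : ν N (Set.Ioo (γ - -γ) (γ + -γ)) = 0 := by
      refine measure_mono_null ?_ (hsupp N)
      intro x hx
      have := hx.2
      simp only [Set.mem_Iio]
      linarith
    rw [hz] at hpos
    exact lt_irrefl _ hpos
  -- nonempty
  have hne : (Attainable ν).Nonempty := by
    have hclosed := hupper Set.univ isClosed_univ
    have hconst : (fun n : ℕ => ((n : ℝ)⁻¹ : EReal) * ENNReal.log (ν n Set.univ))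
        = fun _ => (0 : EReal) := by
      funext n
      rw [measure_univ, ENNReal.log_one, mul_zero]
    rw [hconst, limsup_const] at hclosed
    have hinf : (⨅ x ∈ (Set.univ : Set ℝ), (ψ x : EReal)) < ⊤ := by
      have : (⨅ x ∈ (Set.univ : Set ℝ), (ψ x : EReal)) ≤ 0 := by
        have := EReal.le_neg_of_le_neg hclosed
        rwa [neg_zero] at this
      exact lt_of_le_of_lt this (by norm_num)
    simp only [Set.mem_univ, iInf_pos] at hinf
    obtain ⟨x, hx⟩ := iInf_lt_iff.mp hinf
    have hxfin : ψ x < ⊤ := by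
      by_contra hx'
      rw [not_lt, top_le_iff] at hx'
      rw [hx'] at hx
      exact absurd hx (by simp)
    exact ⟨x, hpsi hxfin⟩
  -- closed
  have hcl : IsClosed (Attainable ν) := by
    rw [← isOpen_compl_iff]
    rw [isOpen_iff_mem_nhds]
    intro γ hγ
    rw [Metric.mem_nhds_iff]
    by_contra hc
    push_neg at hc
    apply hγ
    intro ε hε
    obtain ⟨γ', hγ'ball, hγ'⟩ := Set.not_subset.mp (hc (ε / 2) (by linarith))
    rw [Set.notMem_compl_iff] at hγ'
    obtain ⟨N, hN⟩ := hγ' (ε / 2) (by linarith)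
    refine ⟨N, fun n hn => ?_⟩
    refine lt_of_lt_of_le (hN n hn) (measure_mono ?_)
    have hd : |γ' - γ| < ε / 2 := by
      have := Metric.mem_ball.mp hγ'ball
      rwa [Real.dist_eq] at this
    rw [abs_lt] at hd
    intro x hx
    obtain ⟨h1, h2⟩ := hx
    constructor <;> linarith
  exact ⟨hne, hcl, hsub, hpsi⟩
end

section
/- Let X be a topological space and let (ξ_n)_{n∈ℕ} be a sequence of Borel probability measures on X satisfying the large deviations principle with rate function ϱ : X → [0,∞]. Let f : X → [−∞,0] be Borel measurable and suppose that f⁻¹([a,b]) is a closed subset of X for all real numbers a, b with sup_{x∈X}(f(x) − ϱ(x)) ≤ a ≤ b ≤ 0. Then limsup_{n→∞} (1/n)·log ∫_X e^{n f(x)} ξ_n(dx) ≤ sup_{x∈X} (f(x) − ϱ(x)), where f(x) − ϱ(x) is computed in the extended reals with the convention (−∞) − ∞ = −∞ and e^{−∞} = 0, and both sides lie in [−∞, 0]. -/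
open MeasureTheory Filter Set
open scoped ENNReal NNReal

lemma my_ereal_le_of_forall_lt {x y : EReal} (h : ∀ c : ℝ, y < (c:EReal) → x ≤ (c:EReal)) :
    x ≤ y := by
  by_contra hc
  push_neg at hc
  obtain ⟨c, hyc, hcx⟩ := EReal.exists_between_coe_real hc
  exact absurd (h c hyc) (not_le.mpr hcx)

lemma my_partition (a t : ℝ) (m : ℕ) (hm : 0 < m) (hat : a ≤ t) (ht0 : t ≤ 0) (ha : a < 0) :
    ∃ j, j < m ∧ a + j * (-a / m) ≤ t ∧ t ≤ a + (j + 1) * (-a / m) := by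
  set h := -a / m with hh
  have hmR : (0:ℝ) < m := Nat.cast_pos.mpr hm
  have hpos : 0 < h := div_pos (by linarith) hmR
  have hta : 0 ≤ (t - a) / h := div_nonneg (by linarith) hpos.le
  set j0 := ⌊(t - a) / h⌋₊ with hj0
  have hmh : (m:ℝ) * h = -a := by
    rw [hh, mul_div_assoc', mul_comm, mul_div_assoc, div_self hmR.ne', mul_one]
  by_cases hj : j0 < m
  · refine ⟨j0, hj, ?_, ?_⟩
    · have h1 : (j0:ℝ) ≤ (t - a) / h := Nat.floor_le hta
      have : (j0:ℝ) * h ≤ t - a := (le_div_iff₀ hpos).mp h1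
      linarith
    · have h2 : (t - a) / h < (j0:ℝ) + 1 := Nat.lt_floor_add_one _
      have : t - a < ((j0:ℝ) + 1) * h := (div_lt_iff₀ hpos).mp h2
      linarith
  · push_neg at hj
    have hm1 : ((m - 1 : ℕ) : ℝ) = (m : ℝ) - 1 := by
      rw [Nat.cast_sub hm]; simp
    have : (m:ℝ) ≤ (t - a) / h := le_trans (Nat.cast_le.mpr hj) (Nat.floor_le hta)
    have ht' : (m:ℝ) * h ≤ t - a := (le_div_iff₀ hpos).mp this
    have ht0' : t = 0 := le_antisymm ht0 (by linarith)
    refine ⟨m - 1, Nat.sub_lt hm one_pos, ?_, ?_⟩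
    · rw [hm1]; nlinarith
    · rw [hm1, ht0']; nlinarith

lemma my_expBound (s : ℕ → ℝ≥0∞) (c : ℝ)
    (h : Filter.limsup (fun n : ℕ => ((n:ℝ)⁻¹ : EReal) * ENNReal.log (s n)) Filter.atTop
      < (c : EReal)) :
    ∀ᶠ n : ℕ in Filter.atTop, s n ≤ EReal.exp (((n:ℝ) : EReal) * (c : EReal)) := by
  filter_upwards [Filter.eventually_lt_of_limsup_lt h, Filter.eventually_ge_atTop 1]
    with n hn hn1
  have hnpos : (0:ℝ) < n := by exact_mod_cast hn1
  have key : ENNReal.log (s n) ≤ ((n:ℝ):EReal) * (c:EReal) := by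
    rw [← EReal.div_le_iff_le_mul (by exact_mod_cast hnpos) (by exact EReal.coe_ne_top _)]
    calc ENNReal.log (s n) / ((n:ℝ):EReal)
        = ((n:ℝ)⁻¹ : EReal) * ENNReal.log (s n) := by
          rw [div_eq_mul_inv, mul_comm]
      _ ≤ (c:EReal) := hn.le
  calc s n = EReal.exp (ENNReal.log (s n)) := (ENNReal.exp_log _).symm
    _ ≤ _ := EReal.exp_monotone key

theorem stmt2 {X : Type*} [TopologicalSpace X] [MeasurableSpace X] [BorelSpace X]
    (ξ : ℕ → Measure X) [∀ n, IsProbabilityMeasure (ξ n)]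
    (ϱ : X → ℝ≥0∞) (hLDP : HasLDP ξ ϱ)
    (f : X → EReal) (hf0 : ∀ x, f x ≤ 0) (hfm : Measurable f)
    (hclosed : ∀ a b : ℝ,
      (⨆ x, (f x - (ϱ x : EReal))) ≤ (a : EReal) → a ≤ b → b ≤ 0 →
      IsClosed (f ⁻¹' Set.Icc (a : EReal) (b : EReal))) :
    Filter.limsup
        (fun n : ℕ => ((n : ℝ)⁻¹ : EReal) *
          ENNReal.log (∫⁻ x, EReal.exp (((n : ℝ) : EReal) * f x) ∂(ξ n)))
        Filter.atTop
      ≤ ⨆ x, (f x - (ϱ x : EReal)) := by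
  classical
  set M : EReal := ⨆ x, (f x - (ϱ x : EReal)) with hM
  set u : ℕ → EReal := fun n : ℕ => ((n : ℝ)⁻¹ : EReal) *
      ENNReal.log (∫⁻ x, EReal.exp (((n : ℝ) : EReal) * f x) ∂(ξ n)) with hu
  -- the trivial bound : limsup u ≤ 0
  have h0 : Filter.limsup u Filter.atTop ≤ 0 := by
    refine Filter.limsup_le_of_le (by isBoundedDefault) (Filter.Eventually.of_forall ?_)
    intro n
    have hint : (∫⁻ x, EReal.exp (((n : ℝ) : EReal) * f x) ∂(ξ n)) ≤ 1 := by
      calc (∫⁻ x, EReal.exp (((n : ℝ) : EReal) * f x) ∂(ξ n))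
          ≤ ∫⁻ _, 1 ∂(ξ n) := by
            apply lintegral_mono
            intro x
            exact EReal.exp_le_one_iff.mpr
              (mul_nonpos_of_nonneg_of_nonpos (by exact_mod_cast Nat.cast_nonneg n) (hf0 x))
        _ = 1 := by simp
    have hlog : ENNReal.log (∫⁻ x, EReal.exp (((n : ℝ) : EReal) * f x) ∂(ξ n)) ≤ 0 := by
      calc ENNReal.log (∫⁻ x, EReal.exp (((n : ℝ) : EReal) * f x) ∂(ξ n))
          ≤ ENNReal.log 1 := ENNReal.log_monotone hint
        _ = 0 := ENNReal.log_one
    exact mul_nonpos_of_nonneg_of_nonpos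
      (EReal.inv_nonneg_of_nonneg (by exact_mod_cast Nat.cast_nonneg n)) hlog
  apply my_ereal_le_of_forall_lt
  intro c hMc
  rcases le_or_gt 0 c with hc0 | hc0
  · exact h0.trans (by exact_mod_cast hc0)
  -- choose a real M' with M ≤ M' < c
  obtain ⟨M', hMM'0, hM'c0⟩ := EReal.exists_between_coe_real hMc
  have hMM' : M ≤ (M' : EReal) := hMM'0.le
  have hM'c : M' < c := by exact_mod_cast hM'c0
  -- the number of pieces in the partition
  set m : ℕ := ⌈(-c) / (c - M')⌉₊ + 1 with hm
  have hmpos : 0 < m := Nat.succ_pos _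
  have hmR : (0:ℝ) < m := Nat.cast_pos.mpr hmpos
  have hcM' : (0:ℝ) < c - M' := by linarith
  have hstep : (-c)/(m:ℝ) < c - M' := by
    have h1 : (-c)/(c - M') < (m:ℝ) := by
      calc (-c)/(c-M') ≤ (⌈(-c)/(c-M')⌉₊ : ℝ) := Nat.le_ceil _
        _ < (m:ℝ) := by exact_mod_cast Nat.lt_succ_self _
    have h2 : -c < (m:ℝ) * (c - M') := by
      have := (div_lt_iff₀ hcM').mp h1
      linarith
    rw [div_lt_iff₀ hmR]
    linarith
  have hstep0 : 0 ≤ (-c)/(m:ℝ) := div_nonneg (by linarith) hmR.le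
  have hm0 : (m:ℝ) * ((-c)/m) = -c := by field_simp
  -- the partition points
  set aj : ℕ → ℝ := fun j => c + j * ((-c)/m) with haj
  have haj_ge : ∀ j : ℕ, c ≤ aj j := by
    intro j
    have : 0 ≤ (j:ℝ) * ((-c)/m) := mul_nonneg (Nat.cast_nonneg j) hstep0
    simp only [haj]; linarith
  have haj_mono : ∀ j : ℕ, aj j ≤ aj (j+1) := by
    intro j
    simp only [haj, Nat.cast_add, Nat.cast_one]
    nlinarith
  have haj_le0 : ∀ j : ℕ, j ≤ m → aj j ≤ 0 := by
    intro j hj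
    have hjm : (j:ℝ) ≤ (m:ℝ) := Nat.cast_le.mpr hj
    have : (j:ℝ) * ((-c)/m) ≤ (m:ℝ) * ((-c)/m) := mul_le_mul_of_nonneg_right hjm hstep0
    simp only [haj]
    linarith [hm0]
  -- the partition sets
  set F : ℕ → Set X := fun j => f ⁻¹' Set.Icc ((aj j : ℝ) : EReal) ((aj (j+1) : ℝ) : EReal)
    with hF
  have hFclosed : ∀ j, j < m → IsClosed (F j) := by
    intro j hj
    exact hclosed (aj j) (aj (j+1))
      (hMM'.trans (by exact_mod_cast (hM'c.trans_le (haj_ge j)).le))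
      (haj_mono j) (haj_le0 (j+1) hj)
  -- the LDP upper bound on each piece
  apply my_ereal_le_of_forall_lt
  intro b hcb0
  have hcb : c < b := by exact_mod_cast hcb0
  have hev : ∀ j, j < m → ∀ᶠ n : ℕ in Filter.atTop,
      ξ n (F j) ≤ EReal.exp (((n:ℝ) : EReal) * ((b - aj (j+1) : ℝ) : EReal)) := by
    intro j hj
    apply my_expBound
    calc Filter.limsup (fun n : ℕ => ((n:ℝ)⁻¹ : EReal) * ENNReal.log ((ξ n) (F j)))
          Filter.atTop
        ≤ -(⨅ x ∈ F j, ((ϱ x : ℝ≥0∞) : EReal)) := hLDP.2.1 (F j) (hFclosed j hj)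
      _ ≤ ((M' - aj j : ℝ) : EReal) := by
          rw [EReal.neg_le, ← EReal.coe_neg]
          apply le_iInf₂
          intro x hx
          rcases eq_or_ne (ϱ x) ⊤ with htop | hntop
          · rw [htop, EReal.coe_ennreal_top]; exact le_top
          · have hb1 : ((ϱ x : ℝ≥0∞) : EReal) ≠ ⊥ := by
              intro hbot
              have := EReal.coe_ennreal_nonneg (ϱ x)
              rw [hbot] at this
              exact absurd this (by simp)
            have ht1 : ((ϱ x : ℝ≥0∞) : EReal) ≠ ⊤ := by
              simpa [EReal.coe_ennreal_eq_top_iff] using hntop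
            obtain ⟨r, hr⟩ : ∃ r : ℝ, ((ϱ x : ℝ≥0∞) : EReal) = (r : EReal) :=
              ⟨_, (EReal.coe_toReal ht1 hb1).symm⟩
            have hxb : f x ≠ ⊥ := by
              intro hbot
              have := hx.1
              rw [hbot] at this
              exact absurd this (by simp)
            have hxt : f x ≠ ⊤ := by
              intro htop'
              have := hf0 x
              rw [htop'] at this
              exact absurd this (by simp)
            obtain ⟨t, ht⟩ : ∃ t : ℝ, f x = (t : EReal) := ⟨_, (EReal.coe_toReal hxt hxb).symm⟩
            have hfxM : f x - ((ϱ x : ℝ≥0∞) : EReal) ≤ (M' : EReal) :=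
              le_trans (le_iSup (fun x => f x - ((ϱ x : ℝ≥0∞) : EReal)) x) hMM'
            rw [ht, hr] at hfxM
            rw [← EReal.coe_sub, EReal.coe_le_coe_iff] at hfxM
            have hat : (aj j : EReal) ≤ (t : EReal) := ht ▸ hx.1
            rw [EReal.coe_le_coe_iff] at hat
            rw [hr, EReal.coe_le_coe_iff]
            linarith
      _ < ((b - aj (j+1) : ℝ) : EReal) := by
          rw [EReal.coe_lt_coe_iff]
          have : aj (j+1) = aj j + (-c)/m := by
            simp only [haj, Nat.cast_add, Nat.cast_one]; ring
          rw [this]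
          linarith
  have hevAll : ∀ᶠ n : ℕ in Filter.atTop, ∀ j ∈ Finset.range m,
      ξ n (F j) ≤ EReal.exp (((n:ℝ) : EReal) * ((b - aj (j+1) : ℝ) : EReal)) :=
    (Filter.eventually_all_finset _).2 fun j hj => hev j (Finset.mem_range.1 hj)
  -- the eventual upper bound for u
  have hmain : ∀ᶠ n : ℕ in Filter.atTop,
      u n ≤ (((n:ℝ)⁻¹ * ((n:ℝ) * b + Real.log ((m:ℝ) + 1)) : ℝ) : EReal) := by
    filter_upwards [hevAll, Filter.eventually_ge_atTop 1] with n hn hn1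
    have hnR : (0:ℝ) ≤ (n:ℝ) := Nat.cast_nonneg n
    have hn0 : (0:EReal) ≤ ((n:ℝ) : EReal) := by exact_mod_cast hnR
    have hA : MeasurableSet (f ⁻¹' Set.Iio ((c:ℝ) : EReal)) := hfm measurableSet_Iio
    have hFm : ∀ j, j < m → MeasurableSet (F j) := fun j hj =>
      (hFclosed j hj).measurableSet
    -- pointwise bound
    have hpt : ∀ x, EReal.exp (((n:ℝ) : EReal) * f x) ≤
        (f ⁻¹' Set.Iio ((c:ℝ) : EReal)).indicator
          (fun _ => EReal.exp (((n:ℝ) : EReal) * ((c:ℝ) : EReal))) x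
        + ∑ j ∈ Finset.range m, (F j).indicator
            (fun _ => EReal.exp (((n:ℝ) : EReal) * ((aj (j+1) : ℝ) : EReal))) x := by
      intro x
      by_cases hx : f x < ((c:ℝ) : EReal)
      · rw [Set.indicator_of_mem (by exact hx : x ∈ f ⁻¹' Set.Iio ((c:ℝ) : EReal))]
        refine le_trans ?_ le_self_add
        exact EReal.exp_monotone (mul_le_mul_of_nonneg_left hx.le hn0)
      · push_neg at hx
        have hxb : f x ≠ ⊥ := ((lt_of_lt_of_le (EReal.bot_lt_coe c) hx)).ne'
        have hxt : f x ≠ ⊤ := by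
          intro htop'
          have := hf0 x
          rw [htop'] at this
          exact absurd this (by simp)
        obtain ⟨t, ht⟩ : ∃ t : ℝ, f x = (t : EReal) := ⟨_, (EReal.coe_toReal hxt hxb).symm⟩
        have h1 : c ≤ t := by rw [ht] at hx; exact_mod_cast hx
        have h2 : t ≤ 0 := by
          have := hf0 x; rw [ht] at this; exact_mod_cast this
        obtain ⟨j, hjm, hjl, hjr⟩ := my_partition c t m hmpos h1 h2 hc0
        refine le_trans ?_ le_add_self
        calc EReal.exp (((n:ℝ) : EReal) * f x)
            ≤ EReal.exp (((n:ℝ) : EReal) * ((aj (j+1) : ℝ) : EReal)) := by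
              apply EReal.exp_monotone
              apply mul_le_mul_of_nonneg_left _ hn0
              rw [ht]
              exact_mod_cast hjr
          _ ≤ _ := by
              have hmem : x ∈ F j := by
                simp only [hF, Set.mem_preimage, Set.mem_Icc, ht]
                exact ⟨by exact_mod_cast hjl, by exact_mod_cast hjr⟩
              have hsingle : ((F j).indicator
                  (fun _ => EReal.exp (((n:ℝ) : EReal) * ((aj (j+1) : ℝ) : EReal))) x : ℝ≥0∞)
                  ≤ ∑ i ∈ Finset.range m, (F i).indicator
                    (fun _ => EReal.exp (((n:ℝ) : EReal) * ((aj (i+1) : ℝ) : EReal))) x :=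
                Finset.single_le_sum (f := fun i => (F i).indicator
                  (fun _ => EReal.exp (((n:ℝ) : EReal) * ((aj (i+1) : ℝ) : EReal))) x)
                  (fun i _ => zero_le) (Finset.mem_range.2 hjm)
              rw [Set.indicator_of_mem hmem] at hsingle
              exact hsingle
    -- integral bound
    have hI1 : (∫⁻ x, EReal.exp (((n:ℝ) : EReal) * f x) ∂(ξ n)) ≤
        EReal.exp (((n:ℝ) : EReal) * ((c:ℝ) : EReal)) * ξ n (f ⁻¹' Set.Iio ((c:ℝ) : EReal))
        + ∑ j ∈ Finset.range m,
            EReal.exp (((n:ℝ) : EReal) * ((aj (j+1) : ℝ) : EReal)) * ξ n (F j) := by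
      calc (∫⁻ x, EReal.exp (((n:ℝ) : EReal) * f x) ∂(ξ n))
          ≤ ∫⁻ x, ((f ⁻¹' Set.Iio ((c:ℝ) : EReal)).indicator
              (fun _ => EReal.exp (((n:ℝ) : EReal) * ((c:ℝ) : EReal))) x
            + ∑ j ∈ Finset.range m, (F j).indicator
                (fun _ => EReal.exp (((n:ℝ) : EReal) * ((aj (j+1) : ℝ) : EReal))) x) ∂(ξ n) :=
            lintegral_mono hpt
        _ = (∫⁻ x, (f ⁻¹' Set.Iio ((c:ℝ) : EReal)).indicator
              (fun _ => EReal.exp (((n:ℝ) : EReal) * ((c:ℝ) : EReal))) x ∂(ξ n))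
            + ∫⁻ x, (∑ j ∈ Finset.range m, (F j).indicator
                (fun _ => EReal.exp (((n:ℝ) : EReal) * ((aj (j+1) : ℝ) : EReal))) x) ∂(ξ n) :=
            lintegral_add_left (measurable_const.indicator hA) _
        _ = _ := by
            congr 1
            · exact lintegral_indicator_const hA _
            · rw [lintegral_finset_sum _ (fun j hj =>
                measurable_const.indicator (hFm j (Finset.mem_range.1 hj)))]
              exact Finset.sum_congr rfl fun j hj =>
                lintegral_indicator_const (hFm j (Finset.mem_range.1 hj)) _
    -- bound each summand by exp(n*b)
    have hterm1 : EReal.exp (((n:ℝ) : EReal) * ((c:ℝ) : EReal))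
        * ξ n (f ⁻¹' Set.Iio ((c:ℝ) : EReal))
        ≤ EReal.exp (((n:ℝ) : EReal) * ((b:ℝ) : EReal)) := by
      calc EReal.exp (((n:ℝ) : EReal) * ((c:ℝ) : EReal))
            * ξ n (f ⁻¹' Set.Iio ((c:ℝ) : EReal))
          ≤ EReal.exp (((n:ℝ) : EReal) * ((b:ℝ) : EReal)) * 1 :=
            mul_le_mul' (EReal.exp_monotone (mul_le_mul_of_nonneg_left
              (by exact_mod_cast hcb.le) hn0)) prob_le_one
        _ = _ := mul_one _
    have hterm2 : ∀ j ∈ Finset.range m,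
        EReal.exp (((n:ℝ) : EReal) * ((aj (j+1) : ℝ) : EReal)) * ξ n (F j)
        ≤ EReal.exp (((n:ℝ) : EReal) * ((b:ℝ) : EReal)) := by
      intro j hj
      calc EReal.exp (((n:ℝ) : EReal) * ((aj (j+1) : ℝ) : EReal)) * ξ n (F j)
          ≤ EReal.exp (((n:ℝ) : EReal) * ((aj (j+1) : ℝ) : EReal))
            * EReal.exp (((n:ℝ) : EReal) * ((b - aj (j+1) : ℝ) : EReal)) :=
            mul_le_mul_right (hn j hj) _
        _ = EReal.exp (((n:ℝ) : EReal) * ((b:ℝ) : EReal)) := by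
            rw [← EReal.exp_add]
            congr 1
            rw [← EReal.coe_mul, ← EReal.coe_mul, ← EReal.coe_mul,
              ← EReal.coe_add, EReal.coe_eq_coe_iff]
            ring
    -- total bound
    have hItot : (∫⁻ x, EReal.exp (((n:ℝ) : EReal) * f x) ∂(ξ n)) ≤
        EReal.exp ((((n:ℝ) * b + Real.log ((m:ℝ) + 1) : ℝ)) : EReal) := by
      have hsum : (∑ j ∈ Finset.range m,
          EReal.exp (((n:ℝ) : EReal) * ((aj (j+1) : ℝ) : EReal)) * ξ n (F j))
          ≤ (m : ℝ≥0∞) * EReal.exp (((n:ℝ) : EReal) * ((b:ℝ) : EReal)) := by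
        calc (∑ j ∈ Finset.range m,
            EReal.exp (((n:ℝ) : EReal) * ((aj (j+1) : ℝ) : EReal)) * ξ n (F j))
            ≤ ∑ _j ∈ Finset.range m, EReal.exp (((n:ℝ) : EReal) * ((b:ℝ) : EReal)) :=
              Finset.sum_le_sum hterm2
          _ = (m : ℝ≥0∞) * EReal.exp (((n:ℝ) : EReal) * ((b:ℝ) : EReal)) := by
              rw [Finset.sum_const, Finset.card_range, nsmul_eq_mul]
      calc (∫⁻ x, EReal.exp (((n:ℝ) : EReal) * f x) ∂(ξ n))
          ≤ EReal.exp (((n:ℝ) : EReal) * ((c:ℝ) : EReal))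
              * ξ n (f ⁻¹' Set.Iio ((c:ℝ) : EReal))
            + ∑ j ∈ Finset.range m,
                EReal.exp (((n:ℝ) : EReal) * ((aj (j+1) : ℝ) : EReal)) * ξ n (F j) := hI1
        _ ≤ EReal.exp (((n:ℝ) : EReal) * ((b:ℝ) : EReal))
            + (m : ℝ≥0∞) * EReal.exp (((n:ℝ) : EReal) * ((b:ℝ) : EReal)) :=
            add_le_add hterm1 hsum
        _ = ((m : ℝ≥0∞) + 1) * EReal.exp (((n:ℝ) : EReal) * ((b:ℝ) : EReal)) := by ring
        _ = EReal.exp ((((n:ℝ) * b + Real.log ((m:ℝ) + 1) : ℝ)) : EReal) := by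
            rw [← EReal.coe_mul, EReal.exp_coe, EReal.exp_coe]
            have hmpos' : (0:ℝ) < (m:ℝ) + 1 := by positivity
            have h1 : ((m : ℝ≥0∞) + 1) = ENNReal.ofReal ((m:ℝ) + 1) := by
              rw [ENNReal.ofReal_add (Nat.cast_nonneg m) zero_le_one]
              simp [ENNReal.ofReal_natCast]
            rw [h1, ← ENNReal.ofReal_mul hmpos'.le]
            congr 1
            rw [Real.exp_add, Real.exp_log hmpos']
            ring
    -- take logarithms
    have hlog : ENNReal.log (∫⁻ x, EReal.exp (((n:ℝ) : EReal) * f x) ∂(ξ n))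
        ≤ (((n:ℝ) * b + Real.log ((m:ℝ) + 1) : ℝ) : EReal) := by
      calc ENNReal.log (∫⁻ x, EReal.exp (((n:ℝ) : EReal) * f x) ∂(ξ n))
          ≤ ENNReal.log (EReal.exp ((((n:ℝ) * b + Real.log ((m:ℝ) + 1) : ℝ)) : EReal)) :=
            ENNReal.log_monotone hItot
        _ = _ := EReal.log_exp _
    calc u n ≤ ((n : ℝ)⁻¹ : EReal) * (((n:ℝ) * b + Real.log ((m:ℝ) + 1) : ℝ) : EReal) :=
          mul_le_mul_of_nonneg_left hlog
            (EReal.inv_nonneg_of_nonneg (by exact_mod_cast Nat.cast_nonneg n))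
      _ = _ := by rw [← EReal.coe_inv, ← EReal.coe_mul]
  -- pass to the limsup
  calc Filter.limsup u Filter.atTop
      ≤ Filter.limsup
          (fun n : ℕ => (((n:ℝ)⁻¹ * ((n:ℝ) * b + Real.log ((m:ℝ) + 1)) : ℝ) : EReal))
          Filter.atTop := Filter.limsup_le_limsup hmain
    _ = ((b:ℝ) : EReal) := by
        apply Filter.Tendsto.limsup_eq
        rw [EReal.tendsto_coe]
        have h1 : Filter.Tendsto (fun n : ℕ => b + (n:ℝ)⁻¹ * Real.log ((m:ℝ) + 1))
            Filter.atTop (nhds (b + 0 * Real.log ((m:ℝ) + 1))) :=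
          tendsto_const_nhds.add (tendsto_inv_atTop_nhds_zero_nat.mul_const _)
        rw [zero_mul, add_zero] at h1
        apply h1.congr'
        filter_upwards [Filter.eventually_ge_atTop 1] with n hn1
        have hn0 : (n:ℝ) ≠ 0 := by positivity
        field_simp
end

section
/- Let R be a nonempty closed subset of [0,∞) and define I : ℝ → [0,∞] by I(a) = inf_{γ∈R} ℓ(γ;a). Then for every a ∈ ℝ, I(a) = 0 if and only if a ∈ R. -/
open MeasureTheory Set
open scoped ENNReal NNReal

/-- The Fenchel-Legendre transform of the Poisson cumulant generating function
with parameter `γ ∈ [0,∞)`, evaluated at `a ∈ ℝ`. -/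
noncomputable def ell (γ a : ℝ) : ℝ≥0∞ :=
  if a < 0 then ⊤
  else if a = 0 then ENNReal.ofReal γ
  else if γ = 0 then ⊤
  else ENNReal.ofReal (γ - a + a * Real.log (a / γ))

lemma key_real (a γ : ℝ) (ha : 0 < a) (hγ : 0 < γ) :
    (Real.sqrt γ - Real.sqrt a)^2 ≤ γ - a + a * Real.log (a / γ) := by
  have hda : 0 < γ / a := div_pos hγ ha
  have hs : 0 < Real.sqrt (γ / a) := Real.sqrt_pos.2 hda
  have hlog : Real.log (Real.sqrt (γ / a)) ≤ Real.sqrt (γ / a) - 1 :=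
    Real.log_le_sub_one_of_pos hs
  have hsq : Real.sqrt (γ / a) * Real.sqrt (γ / a) = γ / a := Real.mul_self_sqrt hda.le
  have h2 : Real.log (γ / a) = 2 * Real.log (Real.sqrt (γ / a)) := by
    rw [Real.log_sqrt hda.le]; ring
  have hlogr : Real.log (a / γ) = - Real.log (γ / a) := by
    rw [Real.log_div ha.ne' hγ.ne', Real.log_div hγ.ne' ha.ne']; ring
  have hmul : Real.sqrt a * Real.sqrt (γ / a) = Real.sqrt γ := by
    rw [← Real.sqrt_mul ha.le]
    congr 1
    field_simp
  have hsa : Real.sqrt a * Real.sqrt a = a := Real.mul_self_sqrt ha.le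
  have hsg : Real.sqrt γ * Real.sqrt γ = γ := Real.mul_self_sqrt hγ.le
  have hbound : a * Real.log (γ / a) ≤ 2 * a * (Real.sqrt (γ / a) - 1) := by
    rw [h2]
    nlinarith [hlog, ha.le]
  have h3 : a * Real.sqrt (γ / a) = Real.sqrt a * Real.sqrt γ := by
    calc a * Real.sqrt (γ / a) = Real.sqrt a * Real.sqrt a * Real.sqrt (γ / a) := by
          rw [hsa]
      _ = Real.sqrt a * (Real.sqrt a * Real.sqrt (γ / a)) := by ring
      _ = Real.sqrt a * Real.sqrt γ := by rw [hmul]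
  rw [hlogr]
  nlinarith [hbound, h3, hsa, hsg]

lemma key (a γ : ℝ) (ha : 0 ≤ a) (hγ : 0 ≤ γ) :
    ENNReal.ofReal ((Real.sqrt γ - Real.sqrt a)^2) ≤ ell γ a := by
  unfold ell
  rcases eq_or_lt_of_le ha with rfl | ha'
  · rw [if_neg (lt_irrefl 0), if_pos rfl, Real.sqrt_zero, sub_zero, Real.sq_sqrt hγ]
  · rw [if_neg (not_lt.2 ha), if_neg ha'.ne']
    rcases eq_or_lt_of_le hγ with rfl | hγ'
    · simp
    · rw [if_neg hγ'.ne']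
      exact ENNReal.ofReal_le_ofReal (key_real a γ ha' hγ')

theorem stmt5 (R : Set ℝ) (hR : R.Nonempty) (hRc : IsClosed R) (hR0 : R ⊆ Set.Ici 0)
    (a : ℝ) : (⨅ γ ∈ R, ell γ a) = 0 ↔ a ∈ R := by
  constructor
  · intro h
    by_contra haR
    -- find a positive lower bound c for ell γ a over γ ∈ R
    obtain ⟨c, hc, hcle⟩ : ∃ c : ℝ≥0∞, 0 < c ∧ ∀ γ ∈ R, c ≤ ell γ a := by
      rcases lt_or_ge a 0 with hneg | ha
      · refine ⟨1, one_pos, fun γ hγ => ?_⟩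
        unfold ell
        rw [if_pos hneg]
        exact le_top
      · set ε := Metric.infDist a R with hε
        have hεpos : 0 < ε := by
          exact (hRc.notMem_iff_infDist_pos hR).1 haR
        have hdist : ∀ γ ∈ R, ε ≤ |γ - a| := by
          intro γ hγ
          have := Metric.infDist_le_dist_of_mem (x := a) hγ
          rwa [Real.dist_eq, abs_sub_comm] at this
        -- candidate bounds
        have hup : 0 < (Real.sqrt (a + ε) - Real.sqrt a)^2 := by
          have : Real.sqrt a < Real.sqrt (a + ε) :=
            Real.sqrt_lt_sqrt ha (by linarith)
          exact pow_pos (sub_pos.2 this) 2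
        rcases le_or_gt ε a with hεa | haε
        · -- both sides possible
          have hdown : 0 < (Real.sqrt a - Real.sqrt (a - ε))^2 := by
            have : Real.sqrt (a - ε) < Real.sqrt a :=
              Real.sqrt_lt_sqrt (by linarith) (by linarith)
            exact pow_pos (sub_pos.2 this) 2
          refine ⟨ENNReal.ofReal (min ((Real.sqrt (a + ε) - Real.sqrt a)^2)
            ((Real.sqrt a - Real.sqrt (a - ε))^2)), by
              simp [ENNReal.ofReal_pos, lt_min_iff, hup, hdown], fun γ hγ => ?_⟩
          refine le_trans ?_ (key a γ ha (hR0 hγ))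
          apply ENNReal.ofReal_le_ofReal
          rcases le_or_gt (a + ε) γ with hcase | hcase
          · have h1 : Real.sqrt (a + ε) ≤ Real.sqrt γ := Real.sqrt_le_sqrt hcase
            have h2 : Real.sqrt a ≤ Real.sqrt (a + ε) :=
              Real.sqrt_le_sqrt (by linarith)
            calc min ((Real.sqrt (a + ε) - Real.sqrt a)^2)
                  ((Real.sqrt a - Real.sqrt (a - ε))^2)
                ≤ (Real.sqrt (a + ε) - Real.sqrt a)^2 := min_le_left _ _
              _ ≤ (Real.sqrt γ - Real.sqrt a)^2 := by nlinarith
          · have hcase2 : γ ≤ a - ε := by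
              have := hdist γ hγ
              rcases abs_cases (γ - a) with ⟨he, _⟩ | ⟨he, _⟩ <;> linarith
            have h1 : Real.sqrt γ ≤ Real.sqrt (a - ε) := Real.sqrt_le_sqrt hcase2
            have h2 : Real.sqrt (a - ε) ≤ Real.sqrt a :=
              Real.sqrt_le_sqrt (by linarith)
            calc min ((Real.sqrt (a + ε) - Real.sqrt a)^2)
                  ((Real.sqrt a - Real.sqrt (a - ε))^2)
                ≤ (Real.sqrt a - Real.sqrt (a - ε))^2 := min_le_right _ _
              _ ≤ (Real.sqrt γ - Real.sqrt a)^2 := by nlinarith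
        · -- a < ε : only γ ≥ a + ε possible since γ ≥ 0
          refine ⟨ENNReal.ofReal ((Real.sqrt (a + ε) - Real.sqrt a)^2),
            ENNReal.ofReal_pos.2 hup, fun γ hγ => ?_⟩
          refine le_trans ?_ (key a γ ha (hR0 hγ))
          apply ENNReal.ofReal_le_ofReal
          have hγ0 : (0:ℝ) ≤ γ := hR0 hγ
          have hcase : a + ε ≤ γ := by
            have := hdist γ hγ
            rcases abs_cases (γ - a) with ⟨he, _⟩ | ⟨he, _⟩ <;> linarith
          have h1 : Real.sqrt (a + ε) ≤ Real.sqrt γ := Real.sqrt_le_sqrt hcase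
          have h2 : Real.sqrt a ≤ Real.sqrt (a + ε) := Real.sqrt_le_sqrt (by linarith)
          nlinarith
    have : c ≤ ⨅ γ ∈ R, ell γ a := le_iInf₂ hcle
    rw [h] at this
    exact absurd this (not_le.2 hc)
  · intro haR
    have ha : 0 ≤ a := hR0 haR
    have hzero : ell a a = 0 := by
      unfold ell
      rcases eq_or_lt_of_le ha with rfl | ha'
      · simp
      · rw [if_neg (not_lt.2 ha), if_neg ha'.ne', if_neg ha'.ne',
          div_self ha'.ne', Real.log_one]
        simp
    have hle : (⨅ γ ∈ R, ell γ a) ≤ ell a a := biInf_le _ haR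
    rw [hzero] at hle
    exact le_antisymm hle zero_le
end

section
/- Let R be a nonempty closed subset of [0,∞) and define I : ℝ → [0,∞] by I(a) = inf_{γ∈R} ℓ(γ;a). Suppose a ∈ ℝ satisfies a ∉ R, R ∩ (−∞,a) ≠ ∅ and R ∩ (a,∞) ≠ ∅, and set c₋ = sup(R ∩ (−∞,a)) and c₊ = inf(R ∩ (a,∞)). Then c₋ < a < c₊ with c₋, c₊ ∈ R, and for every b ∈ [c₋, c₊] one has I(b) = min{ℓ(c₋; b), ℓ(c₊; b)}. -/
open MeasureTheory Set
open scoped ENNReal NNReal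

lemma key1 (b x y : ℝ) (hx : 0 < x) (hxy : x ≤ y) (hyb : y ≤ b) :
    y - b * Real.log y ≤ x - b * Real.log x := by
  have hy : 0 < y := hx.trans_le hxy
  have h1 : Real.log (x / y) ≤ x / y - 1 := Real.log_le_sub_one_of_pos (by positivity)
  have h1' : Real.log x - Real.log y ≤ x / y - 1 := by
    rw [← Real.log_div hx.ne' hy.ne']; exact h1
  have h1'' : (Real.log x - Real.log y) * y ≤ x - y := by
    have h := mul_le_mul_of_nonneg_right h1' hy.le
    have hc : x / y * y = x := div_mul_cancel₀ _ hy.ne'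
    nlinarith
  have hd : 0 ≤ Real.log y - Real.log x := by
    nlinarith
  nlinarith [mul_le_mul_of_nonneg_right hyb hd]

lemma key2 (b x y : ℝ) (hb : 0 < b) (hby : b ≤ y) (hyx : y ≤ x) :
    y - b * Real.log y ≤ x - b * Real.log x := by
  have hy : 0 < y := hb.trans_le hby
  have hx : 0 < x := hy.trans_le hyx
  have h1 : Real.log (x / y) ≤ x / y - 1 := Real.log_le_sub_one_of_pos (by positivity)
  have h1' : Real.log x - Real.log y ≤ x / y - 1 := by
    rw [← Real.log_div hx.ne' hy.ne']; exact h1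
  have h1'' : (Real.log x - Real.log y) * y ≤ x - y := by
    have h := mul_le_mul_of_nonneg_right h1' hy.le
    have hc : x / y * y = x := div_mul_cancel₀ _ hy.ne'
    nlinarith
  have hd : 0 ≤ Real.log x - Real.log y := by
    have := Real.log_le_log hy hyx
    linarith
  nlinarith [mul_le_mul_of_nonneg_right hby hd]

lemma ell_anti (b x y : ℝ) (hx : 0 ≤ x) (hxy : x ≤ y) (hyb : y ≤ b) :
    ell y b ≤ ell x b := by
  unfold ell
  rcases lt_trichotomy b 0 with hb | hb | hb
  · simp [hb]
  · subst hb
    have : x = 0 := le_antisymm (hxy.trans hyb) hx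
    have : y = 0 := le_antisymm hyb (hx.trans hxy)
    simp_all
  · rw [if_neg (not_lt.mpr hb.le), if_neg hb.ne', if_neg (not_lt.mpr hb.le), if_neg hb.ne']
    rcases eq_or_lt_of_le hx with hx0 | hx0
    · rw [if_pos hx0.symm]; exact le_top
    · have hy0 : 0 < y := hx0.trans_le hxy
      rw [if_neg hx0.ne', if_neg hy0.ne']
      apply ENNReal.ofReal_le_ofReal
      have h1 := key1 b x y hx0 hxy hyb
      rw [Real.log_div hb.ne' hx0.ne', Real.log_div hb.ne' hy0.ne']
      nlinarith

lemma ell_mono (b x y : ℝ) (hb : 0 ≤ b) (hby : b ≤ y) (hyx : y ≤ x) :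
    ell y b ≤ ell x b := by
  unfold ell
  rw [if_neg (not_lt.mpr hb), if_neg (not_lt.mpr hb)]
  rcases eq_or_lt_of_le hb with hb0 | hb0
  · rw [if_pos hb0.symm, if_pos hb0.symm]
    exact ENNReal.ofReal_le_ofReal hyx
  · have hy0 : 0 < y := hb0.trans_le hby
    have hx0 : 0 < x := hy0.trans_le hyx
    rw [if_neg hb0.ne', if_neg hb0.ne', if_neg hy0.ne', if_neg hx0.ne']
    apply ENNReal.ofReal_le_ofReal
    have h1 := key2 b x y hb0 hby hyx
    rw [Real.log_div hb0.ne' hx0.ne', Real.log_div hb0.ne' hy0.ne']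
    nlinarith

theorem stmt7 (R : Set ℝ) (hR : R.Nonempty) (hRc : IsClosed R) (hR0 : R ⊆ Set.Ici 0)
    (a : ℝ) (ha : a ∉ R)
    (h₁ : (R ∩ Set.Iio a).Nonempty) (h₂ : (R ∩ Set.Ioi a).Nonempty) :
    sSup (R ∩ Set.Iio a) < a ∧ a < sInf (R ∩ Set.Ioi a) ∧
      sSup (R ∩ Set.Iio a) ∈ R ∧ sInf (R ∩ Set.Ioi a) ∈ R ∧
      ∀ b ∈ Set.Icc (sSup (R ∩ Set.Iio a)) (sInf (R ∩ Set.Ioi a)),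
        (⨅ γ ∈ R, ell γ b) =
          min (ell (sSup (R ∩ Set.Iio a)) b) (ell (sInf (R ∩ Set.Ioi a)) b) := by
  set cm := sSup (R ∩ Set.Iio a) with hcm
  set cp := sInf (R ∩ Set.Ioi a) with hcp
  have bddA : BddAbove (R ∩ Set.Iio a) := ⟨a, fun x hx => hx.2.le⟩
  have bddB : BddBelow (R ∩ Set.Ioi a) := ⟨a, fun x hx => hx.2.le⟩
  have hcmR : cm ∈ R :=
    hRc.closure_subset_iff.mpr inter_subset_left (csSup_mem_closure h₁ bddA)
  have hcpR : cp ∈ R :=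
    hRc.closure_subset_iff.mpr inter_subset_left (csInf_mem_closure h₂ bddB)
  have hcma : cm < a :=
    lt_of_le_of_ne (csSup_le h₁ fun x hx => hx.2.le) (fun h => ha (h ▸ hcmR))
  have hacp : a < cp :=
    lt_of_le_of_ne (le_csInf h₂ fun x hx => hx.2.le) (fun h => ha (h.symm ▸ hcpR))
  have dich : ∀ r ∈ R, r ≤ cm ∨ cp ≤ r := by
    intro r hr
    rcases lt_trichotomy r a with h | h | h
    · exact Or.inl (le_csSup bddA ⟨hr, h⟩)
    · exact absurd (h ▸ hr) ha
    · exact Or.inr (csInf_le bddB ⟨hr, h⟩)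
  refine ⟨hcma, hacp, hcmR, hcpR, fun b hb => ?_⟩
  have hcm0 : 0 ≤ cm := hR0 hcmR
  have hb0 : 0 ≤ b := hcm0.trans hb.1
  apply le_antisymm
  · exact le_min (iInf₂_le cm hcmR) (iInf₂_le cp hcpR)
  · refine le_iInf₂ fun γ hγ => ?_
    rcases dich γ hγ with h | h
    · exact (min_le_left _ _).trans (ell_anti b γ cm (hR0 hγ) h hb.1)
    · exact (min_le_right _ _).trans (ell_mono b γ cp hb0 hb.2 h)
end

section
/- Let 0 < α < β < γ < δ < ∞, let R = [α,β] ∪ [γ,δ], and define I : ℝ → [0,∞] by I(a) = inf_{c∈R} ℓ(c;a). Then I(a) = ∞ for a < 0; I(a) = ℓ(α;a) for a ∈ [0,α]; I(a) = 0 for a ∈ [α,β] ∪ [γ,δ]; I(a) = min{ℓ(β;a), ℓ(γ;a)} for a ∈ [β,γ]; and I(a) = ℓ(δ;a) for a ∈ [δ,∞). -/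
open MeasureTheory Set
open scoped ENNReal NNReal

lemma ell_mono_s8 {a c₁ c₂ : ℝ} (ha : 0 ≤ a) (hc₁ : 0 < c₁) (hac : a ≤ c₁) (h12 : c₁ ≤ c₂) :
    ell c₁ a ≤ ell c₂ a := by
  have hc₂ : 0 < c₂ := lt_of_lt_of_le hc₁ h12
  rcases ha.lt_or_eq with ha' | ha'
  · simp only [ell, not_lt.2 ha, if_neg, ha'.ne', hc₁.ne', hc₂.ne', if_false,
      if_neg (not_lt.2 ha)]
    apply ENNReal.ofReal_le_ofReal
    rw [Real.log_div ha'.ne' hc₁.ne', Real.log_div ha'.ne' hc₂.ne']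
    have hlog : Real.log c₂ - Real.log c₁ ≤ c₂ / c₁ - 1 := by
      have := Real.log_le_sub_one_of_pos (div_pos hc₂ hc₁)
      rwa [Real.log_div hc₂.ne' hc₁.ne'] at this
    have h1 : a * (Real.log c₂ - Real.log c₁) ≤ a * (c₂ / c₁ - 1) :=
      mul_le_mul_of_nonneg_left hlog ha
    have h2 : a * (c₂ / c₁ - 1) ≤ c₂ - c₁ := by
      rw [div_sub_one hc₁.ne']
      have hnn : 0 ≤ (c₂ - c₁) / c₁ := div_nonneg (by linarith) hc₁.le
      calc a * ((c₂ - c₁) / c₁) ≤ c₁ * ((c₂ - c₁) / c₁) :=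
            mul_le_mul_of_nonneg_right hac hnn
        _ = c₂ - c₁ := by field_simp
    nlinarith
  · simp [ell, ← ha', ENNReal.ofReal_le_ofReal h12]

lemma ell_anti_s8 {a c₁ c₂ : ℝ} (hc₁ : 0 < c₁) (h12 : c₁ ≤ c₂) (hca : c₂ ≤ a) :
    ell c₂ a ≤ ell c₁ a := by
  have hc₂ : 0 < c₂ := lt_of_lt_of_le hc₁ h12
  have ha : 0 < a := lt_of_lt_of_le hc₂ hca
  simp only [ell, if_neg (not_lt.2 ha.le), if_neg ha.ne', if_neg hc₁.ne', if_neg hc₂.ne']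
  apply ENNReal.ofReal_le_ofReal
  rw [Real.log_div ha.ne' hc₁.ne', Real.log_div ha.ne' hc₂.ne']
  have hlog : Real.log c₁ - Real.log c₂ ≤ c₁ / c₂ - 1 := by
    have := Real.log_le_sub_one_of_pos (div_pos hc₁ hc₂)
    rwa [Real.log_div hc₁.ne' hc₂.ne'] at this
  -- goal: c₂ - a + a * (log a - log c₂) ≤ c₁ - a + a * (log a - log c₁)
  -- i.e. c₂ - c₁ ≤ a * (log c₂ - log c₁) ≥ a * (1 - c₁/c₂) = a (c₂-c₁)/c₂ ≥ c₂ - c₁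
  have h1 : a * (Real.log c₁ - Real.log c₂) ≤ a * (c₁ / c₂ - 1) :=
    mul_le_mul_of_nonneg_left hlog ha.le
  have h2 : a * (c₁ / c₂ - 1) ≤ c₁ - c₂ := by
    rw [div_sub_one hc₂.ne']
    have hneg : (c₁ - c₂) / c₂ ≤ 0 := by
      apply div_nonpos_of_nonpos_of_nonneg (by linarith) hc₂.le
    calc a * ((c₁ - c₂) / c₂) ≤ c₂ * ((c₁ - c₂) / c₂) := by
          apply mul_le_mul_of_nonpos_right hca hneg
      _ = c₁ - c₂ := by field_simp
  nlinarith

lemma ell_self {a : ℝ} (ha : 0 < a) : ell a a = 0 := by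
  simp [ell, not_lt.2 ha.le, ha.ne', div_self ha.ne', Real.log_one]

theorem stmt8 (α β γ δ : ℝ) (h0 : 0 < α) (h1 : α < β) (h2 : β < γ) (h3 : γ < δ) :
    (∀ a : ℝ, a < 0 → (⨅ c ∈ Set.Icc α β ∪ Set.Icc γ δ, ell c a) = ⊤) ∧
    (∀ a ∈ Set.Icc (0 : ℝ) α, (⨅ c ∈ Set.Icc α β ∪ Set.Icc γ δ, ell c a) = ell α a) ∧
    (∀ a ∈ Set.Icc α β ∪ Set.Icc γ δ, (⨅ c ∈ Set.Icc α β ∪ Set.Icc γ δ, ell c a) = 0) ∧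
    (∀ a ∈ Set.Icc β γ,
      (⨅ c ∈ Set.Icc α β ∪ Set.Icc γ δ, ell c a) = min (ell β a) (ell γ a)) ∧
    (∀ a ∈ Set.Ici δ, (⨅ c ∈ Set.Icc α β ∪ Set.Icc γ δ, ell c a) = ell δ a) := by
  have hαmem : α ∈ Set.Icc α β ∪ Set.Icc γ δ := Or.inl ⟨le_refl _, h1.le⟩
  have hβmem : β ∈ Set.Icc α β ∪ Set.Icc γ δ := Or.inl ⟨h1.le, le_refl _⟩
  have hγmem : γ ∈ Set.Icc α β ∪ Set.Icc γ δ := Or.inr ⟨le_refl _, h3.le⟩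
  have hδmem : δ ∈ Set.Icc α β ∪ Set.Icc γ δ := Or.inr ⟨h3.le, le_refl _⟩
  refine ⟨?_, ?_, ?_, ?_, ?_⟩
  · intro a ha
    simp [ell, ha]
  · intro a ⟨ha0, haα⟩
    refine le_antisymm (iInf₂_le α hαmem) (le_iInf₂ fun c hc => ?_)
    have hcα : α ≤ c := by
      rcases hc with ⟨h, _⟩ | ⟨h, _⟩ <;> linarith
    exact ell_mono_s8 ha0 h0 haα hcα
  · intro a ha
    have ha0 : 0 < a := by
      rcases ha with ⟨h, _⟩ | ⟨h, _⟩ <;> linarith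
    refine le_antisymm ?_ zero_le
    calc (⨅ c ∈ Set.Icc α β ∪ Set.Icc γ δ, ell c a) ≤ ell a a := iInf₂_le a ha
      _ = 0 := ell_self ha0
  · intro a ⟨haβ, haγ⟩
    have ha0 : 0 < a := lt_of_lt_of_le (h0.trans h1) haβ
    refine le_antisymm (le_min (iInf₂_le β hβmem) (iInf₂_le γ hγmem))
      (le_iInf₂ fun c hc => ?_)
    rcases hc with ⟨hc1, hc2⟩ | ⟨hc1, hc2⟩
    · exact le_trans (min_le_left _ _) (ell_anti_s8 (h0.trans_le hc1) hc2 haβ)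
    · exact le_trans (min_le_right _ _) (ell_mono_s8 ha0.le (h0.trans (h1.trans h2)) haγ hc1)
  · intro a ha
    simp only [Set.mem_Ici] at ha
    refine le_antisymm (iInf₂_le δ hδmem) (le_iInf₂ fun c hc => ?_)
    rcases hc with ⟨hc1, hc2⟩ | ⟨hc1, hc2⟩
    · exact ell_anti_s8 (h0.trans_le hc1) (by linarith) ha
    · exact ell_anti_s8 ((h0.trans (h1.trans h2)).trans_le hc1) (by linarith) ha
end

section
/- Let E be a metric space, let λ, κ, μ : E → [0,∞) be continuous and bounded, let t > 0, and let f₁, f₂ : [0,∞) → E be Borel measurable. For x ∈ [0,t] define g_x : [0,∞) → E by g_x(s) = f₁(s) if s < x and g_x(s) = f₂(s) if s ≥ x. Then for every real number c lying between φ_t(f₁) and φ_t(f₂) (i.e. min{φ_t(f₁), φ_t(f₂)} ≤ c ≤ max{φ_t(f₁), φ_t(f₂)}) there exists x ∈ [0,t] with φ_t(g_x) = c. -/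
open MeasureTheory Set Filter
open scoped ENNReal Topology

/-- The random Poisson parameter functional:
`φ_t(f) = ∫₀ᵗ λ(f(s)) · exp(−κ(f(s)) · ∫ₛᵗ μ(f(r)) dr) ds`. -/
noncomputable def phi {E : Type*} (lam kap mu : E → ℝ) (t : ℝ) (f : ℝ → E) : ℝ :=
  ∫ s in (0 : ℝ)..t, lam (f s) * Real.exp (-(kap (f s)) * ∫ r in s..t, mu (f r))

theorem stmt9 {E : Type*} [MetricSpace E] [MeasurableSpace E] [BorelSpace E]
    (lam kap mu : E → ℝ)
    (hlamc : Continuous lam) (hkapc : Continuous kap) (hmuc : Continuous mu)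
    (hlam0 : ∀ x, 0 ≤ lam x) (hkap0 : ∀ x, 0 ≤ kap x) (hmu0 : ∀ x, 0 ≤ mu x)
    (hlamb : ∃ C : ℝ, ∀ x, lam x ≤ C) (hkapb : ∃ C : ℝ, ∀ x, kap x ≤ C)
    (hmub : ∃ C : ℝ, ∀ x, mu x ≤ C)
    (t : ℝ) (ht : 0 < t)
    (f₁ f₂ : ℝ → E) (hf₁ : Measurable f₁) (hf₂ : Measurable f₂)
    (c : ℝ)
    (hc₁ : min (phi lam kap mu t f₁) (phi lam kap mu t f₂) ≤ c)
    (hc₂ : c ≤ max (phi lam kap mu t f₁) (phi lam kap mu t f₂)) :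
    ∃ x ∈ Set.Icc (0 : ℝ) t,
      phi lam kap mu t (fun s => if s < x then f₁ s else f₂ s) = c := by
  classical
  obtain ⟨Cl, hCl⟩ := hlamb
  obtain ⟨Cm, hCm⟩ := hmub
  have hCl0 : 0 ≤ Cl := le_trans (hlam0 (f₁ 0)) (hCl _)
  have hCm0 : 0 ≤ Cm := le_trans (hmu0 (f₁ 0)) (hCm _)
  set g : ℝ → ℝ → E := fun x s => if s < x then f₁ s else f₂ s with hg_def
  have hgmeas : ∀ x, Measurable (g x) := fun x =>
    Measurable.ite (measurableSet_lt measurable_id measurable_const) hf₁ hf₂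
  -- interval integrability of mu ∘ h for any measurable h
  have hmuInt : ∀ (h : ℝ → E), Measurable h → ∀ a b : ℝ,
      IntervalIntegrable (fun r => mu (h r)) volume a b := by
    intro h hh a b
    rw [intervalIntegrable_iff]
    apply MeasureTheory.Integrable.mono' (g := fun _ : ℝ => Cm)
    · exact integrableOn_const measure_Ioc_lt_top.ne
    · exact (hmuc.measurable.comp hh).aestronglyMeasurable
    · exact ae_of_all _ fun r => by
        rw [Real.norm_eq_abs, abs_of_nonneg (hmu0 _)]; exact hCm _
  -- the inner integral
  set I : (ℝ → E) → ℝ → ℝ := fun h s => ∫ r in s..t, mu (h r) with hI_def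
  have hInonneg : ∀ (h : ℝ → E), ∀ s, s ≤ t → 0 ≤ I h s := fun h s hs =>
    intervalIntegral.integral_nonneg hs (fun r _ => hmu0 _)
  -- Lipschitz estimate for x ↦ I (g x) s
  have key : ∀ x y, x ≤ y → ∀ s, s ≤ t → |I (g x) s - I (g y) s| ≤ Cm * (y - x) := by
    intro x y hxy s hst
    have h1 := hmuInt (g x) (hgmeas x) s t
    have h2 := hmuInt (g y) (hgmeas y) s t
    have hindInt : Integrable ((Ico x y).indicator (fun _ : ℝ => Cm)) volume := by
      rw [integrable_indicator_iff measurableSet_Ico]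
      exact integrableOn_const measure_Ico_lt_top.ne
    have hind : IntervalIntegrable ((Ico x y).indicator (fun _ : ℝ => Cm)) volume s t :=
      hindInt.intervalIntegrable
    have hdiff : ∀ r, |mu (g x r) - mu (g y r)| ≤ (Ico x y).indicator (fun _ => Cm) r := by
      intro r
      by_cases hr : r ∈ Ico x y
      · rw [indicator_of_mem hr]
        have hax := hmu0 (g x r); have hbx := hCm (g x r)
        have hay := hmu0 (g y r); have hby := hCm (g y r)
        rw [abs_sub_le_iff]; constructor <;> linarith
      · rw [indicator_of_notMem hr]
        have hgeq : g x r = g y r := by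
          simp only [hg_def]
          by_cases h1' : r < x
          · rw [if_pos h1', if_pos (lt_of_lt_of_le h1' hxy)]
          · rw [if_neg h1', if_neg (fun h2' => hr ⟨not_lt.mp h1', h2'⟩)]
        rw [hgeq, sub_self, abs_zero]
    have habs : IntervalIntegrable (fun r => |mu (g x r) - mu (g y r)|) volume s t :=
      (h1.sub h2).abs
    calc |I (g x) s - I (g y) s|
        = |∫ r in s..t, (mu (g x r) - mu (g y r))| := by
          rw [intervalIntegral.integral_sub h1 h2]
      _ ≤ ∫ r in s..t, |mu (g x r) - mu (g y r)| := by
          simpa [Real.norm_eq_abs] using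
            intervalIntegral.norm_integral_le_integral_norm
              (f := fun r => mu (g x r) - mu (g y r)) (μ := volume) hst
      _ ≤ ∫ r in s..t, (Ico x y).indicator (fun _ => Cm) r :=
          intervalIntegral.integral_mono_on hst habs hind (fun r _ => hdiff r)
      _ ≤ ∫ r, (Ico x y).indicator (fun _ => Cm) r := by
          rw [intervalIntegral.integral_of_le hst]
          exact setIntegral_le_integral hindInt
            (ae_of_all _ fun r => indicator_nonneg (fun _ _ => hCm0) r)
      _ = Cm * (y - x) := by
          rw [MeasureTheory.integral_indicator_const _ measurableSet_Ico,
            Real.volume_real_Ico_of_le hxy, smul_eq_mul]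
          ring
  have hILip : ∀ s, s ≤ t → ∀ x y, |I (g x) s - I (g y) s| ≤ Cm * |x - y| := by
    intro s hst x y
    rcases le_total x y with h | h
    · calc |I (g x) s - I (g y) s| ≤ Cm * (y - x) := key x y h s hst
        _ = Cm * |x - y| := by rw [abs_sub_comm, abs_of_nonneg (sub_nonneg.mpr h)]
    · rw [abs_sub_comm]
      calc |I (g y) s - I (g x) s| ≤ Cm * (x - y) := key y x h s hst
        _ = Cm * |x - y| := by rw [abs_of_nonneg (sub_nonneg.mpr h)]
  have hJcont : ∀ s, s ≤ t → Continuous (fun x => I (g x) s) := by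
    intro s hst
    have hL : LipschitzWith (Real.toNNReal Cm) (fun x => I (g x) s) := by
      apply LipschitzWith.of_dist_le_mul
      intro x y
      rw [Real.dist_eq, Real.dist_eq]
      calc |I (g x) s - I (g y) s| ≤ Cm * |x - y| := hILip s hst x y
        _ ≤ Real.toNNReal Cm * |x - y| := by
            gcongr
            exact Real.le_coe_toNNReal Cm
    exact hL.continuous
  -- continuity of s ↦ I h s, for measurability of the outer integrand
  have hIcont : ∀ (h : ℝ → E), Measurable h → Continuous (fun s => I h s) := by
    intro h hh
    have hprim : Continuous (fun s => ∫ r in t..s, mu (h r)) :=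
      intervalIntegral.continuous_primitive (hmuInt h hh) t
    have heq : (fun s => I h s) = fun s => -(∫ r in t..s, mu (h r)) := by
      funext s; rw [← intervalIntegral.integral_symm]
    rw [heq]
    exact hprim.neg
  have hFmeas : ∀ x, AEStronglyMeasurable
      (fun s => lam (g x s) * Real.exp (-(kap (g x s)) * I (g x) s))
      (volume.restrict (Ioc 0 t)) := by
    intro x
    apply Measurable.aestronglyMeasurable
    exact (hlamc.measurable.comp (hgmeas x)).mul
      (Real.measurable_exp.comp
        (((hkapc.measurable.comp (hgmeas x)).neg).mul
          (hIcont (g x) (hgmeas x)).measurable))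
  have hPhiEq : ∀ x, phi lam kap mu t (g x)
      = ∫ s in Ioc 0 t, lam (g x s) * Real.exp (-(kap (g x s)) * I (g x) s) := by
    intro x
    unfold phi
    rw [intervalIntegral.integral_of_le ht.le]
  have hPhiCont : Continuous fun x =>
      ∫ s in Ioc 0 t, lam (g x s) * Real.exp (-(kap (g x s)) * I (g x) s) := by
    rw [continuous_iff_continuousAt]
    intro x₀
    apply continuousAt_of_dominated (bound := fun _ => Cl)
    · exact Filter.Eventually.of_forall hFmeas
    · apply Filter.Eventually.of_forall
      intro x
      rw [ae_restrict_iff' measurableSet_Ioc]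
      apply ae_of_all
      intro s hs
      rw [Real.norm_eq_abs, abs_of_nonneg (mul_nonneg (hlam0 _) (Real.exp_nonneg _))]
      calc lam (g x s) * Real.exp (-(kap (g x s)) * I (g x) s) ≤ Cl * 1 := by
            apply mul_le_mul (hCl _) ?_ (Real.exp_nonneg _) hCl0
            rw [Real.exp_le_one_iff]
            have h1 := hInonneg (g x) s hs.2
            have h2 := hkap0 (g x s)
            nlinarith
        _ = Cl := mul_one Cl
    · exact integrableOn_const measure_Ioc_lt_top.ne
    · have h0 : ∀ᵐ s : ℝ, s ≠ x₀ := compl_mem_ae_iff.mpr Real.volume_singleton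
      have h1 : ∀ᵐ s ∂(volume.restrict (Ioc 0 t)), s ≠ x₀ := ae_restrict_of_ae h0
      have h2 : ∀ᵐ s ∂(volume.restrict (Ioc 0 t)), s ∈ Ioc 0 t :=
        ae_restrict_mem measurableSet_Ioc
      filter_upwards [h1, h2] with s hs hs'
      have hloc : ∀ᶠ x in 𝓝 x₀, g x s = g x₀ s := by
        have hiff : ∀ᶠ x in 𝓝 x₀, (s < x ↔ s < x₀) := by
          rcases lt_or_gt_of_ne hs with h | h
          · filter_upwards [eventually_gt_nhds h] with x hx
            simp [hx, h]
          · filter_upwards [eventually_lt_nhds h] with x hx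
            simp [not_lt.2 hx.le, not_lt.2 h.le]
        filter_upwards [hiff] with x hx
        simp only [hg_def]
        by_cases h : s < x₀
        · rw [if_pos (hx.mpr h), if_pos h]
        · rw [if_neg (fun hh => h (hx.mp hh)), if_neg h]
      have hcont : ContinuousAt
          (fun x => lam (g x₀ s) * Real.exp (-(kap (g x₀ s)) * I (g x) s)) x₀ :=
        (continuous_const.mul
          (Real.continuous_exp.comp (continuous_const.mul (hJcont s hs'.2)))).continuousAt
      apply hcont.congr
      filter_upwards [hloc] with x hx
      rw [hx]
  -- endpoint values
  have hend0 : phi lam kap mu t (g 0) = phi lam kap mu t f₂ := by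
    unfold phi
    apply intervalIntegral.integral_congr
    intro s hs
    rw [uIcc_of_le ht.le] at hs
    beta_reduce
    have hg0 : ∀ r : ℝ, 0 ≤ r → g 0 r = f₂ r := fun r hr => if_neg (not_lt.mpr hr)
    have hin : (∫ r in s..t, mu (g 0 r)) = ∫ r in s..t, mu (f₂ r) := by
      apply intervalIntegral.integral_congr
      intro r hr
      rw [uIcc_of_le hs.2] at hr
      beta_reduce
      rw [hg0 r (le_trans hs.1 hr.1)]
    rw [hg0 s hs.1, hin]
  have hendt : phi lam kap mu t (g t) = phi lam kap mu t f₁ := by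
    unfold phi
    rw [intervalIntegral.integral_of_le ht.le, intervalIntegral.integral_of_le ht.le]
    apply setIntegral_congr_ae measurableSet_Ioc
    have h0 : ∀ᵐ s : ℝ, s ≠ t := compl_mem_ae_iff.mpr Real.volume_singleton
    filter_upwards [h0] with s hs hsmem
    beta_reduce
    have hst : s < t := lt_of_le_of_ne hsmem.2 hs
    have hgt : g t s = f₁ s := if_pos hst
    have hin : (∫ r in s..t, mu (g t r)) = ∫ r in s..t, mu (f₁ r) := by
      rw [intervalIntegral.integral_of_le hst.le, intervalIntegral.integral_of_le hst.le]
      apply setIntegral_congr_ae measurableSet_Ioc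
      have h0' : ∀ᵐ r : ℝ, r ≠ t := compl_mem_ae_iff.mpr Real.volume_singleton
      filter_upwards [h0'] with r hr hrmem
      beta_reduce
      rw [show g t r = f₁ r from if_pos (lt_of_le_of_ne hrmem.2 hr)]
    rw [hgt, hin]
  -- intermediate value theorem
  have hΦ : ContinuousOn (fun x => phi lam kap mu t (g x)) (uIcc 0 t) := by
    have heq : (fun x => phi lam kap mu t (g x))
        = fun x => ∫ s in Ioc 0 t, lam (g x s) * Real.exp (-(kap (g x s)) * I (g x) s) :=
      funext hPhiEq
    rw [heq]
    exact hPhiCont.continuousOn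
  have hsub := intermediate_value_uIcc hΦ
  have hcmem : c ∈ uIcc (phi lam kap mu t (g 0)) (phi lam kap mu t (g t)) := by
    rw [hend0, hendt, Set.mem_uIcc]
    rcases le_total (phi lam kap mu t f₁) (phi lam kap mu t f₂) with h | h
    · right
      exact ⟨by rw [min_eq_left h] at hc₁; exact hc₁,
        by rw [max_eq_right h] at hc₂; exact hc₂⟩
    · left
      exact ⟨by rw [min_eq_right h] at hc₁; exact hc₁,
        by rw [max_eq_left h] at hc₂; exact hc₂⟩
  obtain ⟨x, hx, hxc⟩ := hsub hcmem
  rw [uIcc_of_le ht.le] at hx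
  exact ⟨x, hx, hxc⟩
end

section
/- Let E be a metric space, let λ, κ, μ : E → [0,∞) be continuous, let t > 0, and let f, f₁, f₂, … : [0,∞) → E be Borel measurable functions such that f_n → f uniformly on [0,t] and such that there is a compact set K ⊆ E containing f_n(s) and f(s) for all n ∈ ℕ and all s ∈ [0,t]. Then φ_t(f_n) → φ_t(f) as n → ∞. -/
open MeasureTheory Set Filter
open scoped ENNReal Topology

theorem stmt11 {E : Type*} [MetricSpace E] [MeasurableSpace E] [BorelSpace E]
    (lam kap mu : E → ℝ)
    (hlamc : Continuous lam) (hkapc : Continuous kap) (hmuc : Continuous mu)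
    (hlam0 : ∀ x, 0 ≤ lam x) (hkap0 : ∀ x, 0 ≤ kap x) (hmu0 : ∀ x, 0 ≤ mu x)
    (t : ℝ) (ht : 0 < t)
    (f : ℝ → E) (F : ℕ → ℝ → E)
    (hfm : Measurable f) (hFm : ∀ n, Measurable (F n))
    (hunif : TendstoUniformlyOn F f Filter.atTop (Set.Icc 0 t))
    (K : Set E) (hK : IsCompact K)
    (hfK : ∀ s ∈ Set.Icc (0 : ℝ) t, f s ∈ K)
    (hFK : ∀ n, ∀ s ∈ Set.Icc (0 : ℝ) t, F n s ∈ K) :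
    Filter.Tendsto (fun n => phi lam kap mu t (F n)) Filter.atTop
      (nhds (phi lam kap mu t f)) := by
  classical
  obtain ⟨Mlam, hMlam⟩ := hK.exists_bound_of_continuousOn hlamc.continuousOn
  obtain ⟨Mmu, hMmu⟩ := hK.exists_bound_of_continuousOn hmuc.continuousOn
  -- integrability of mu ∘ g on Icc 0 t for suitable g
  have hMuInt : ∀ (g : ℝ → E), Measurable g → (∀ s ∈ Icc (0:ℝ) t, g s ∈ K) →
      IntegrableOn (fun r => mu (g r)) (Icc (0:ℝ) t) := by
    intro g hg hgK
    refine (integrable_const Mmu).mono'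
      ((hmuc.measurable.comp hg).aestronglyMeasurable) ?_
    filter_upwards [ae_restrict_mem measurableSet_Icc] with r hr
    exact hMmu _ (hgK r hr)
  -- inner integral convergence
  have hinner : ∀ s ∈ Icc (0:ℝ) t,
      Tendsto (fun n => ∫ r in s..t, mu (F n r)) atTop
        (nhds (∫ r in s..t, mu (f r))) := by
    intro s hs
    apply intervalIntegral.tendsto_integral_filter_of_dominated_convergence (fun _ => Mmu)
    · exact Eventually.of_forall fun n =>
        ((hmuc.measurable.comp (hFm n)).aestronglyMeasurable).restrict
    · refine Eventually.of_forall fun n => Eventually.of_forall fun r hr => ?_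
      rw [uIoc_of_le hs.2] at hr
      exact hMmu _ (hFK n r ⟨hs.1.trans hr.1.le, hr.2⟩)
    · exact intervalIntegrable_const
    · refine Eventually.of_forall fun r hr => ?_
      rw [uIoc_of_le hs.2] at hr
      have hrI : r ∈ Icc (0:ℝ) t := ⟨hs.1.trans hr.1.le, hr.2⟩
      exact ((hmuc.tendsto _).comp (hunif.tendsto_at hrI))
  -- measurability of the inner integral as a function of s
  have humeas : ∀ (g : ℝ → E), Measurable g → (∀ s ∈ Icc (0:ℝ) t, g s ∈ K) →
      AEMeasurable (fun s => ∫ r in s..t, mu (g r))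
        (volume.restrict (Ioc (0:ℝ) t)) := by
    intro g hg hgK
    have hint : IntegrableOn (fun r => mu (g r)) (uIcc (0:ℝ) t) := by
      rw [uIcc_of_le ht.le]; exact hMuInt g hg hgK
    have hcont : ContinuousOn (fun s => ∫ r in s..t, mu (g r)) (Icc (0:ℝ) t) := by
      have := intervalIntegral.continuousOn_primitive_interval_left (f := fun r => mu (g r))
        (a := 0) (b := t) (μ := volume) hint
      rwa [uIcc_of_le ht.le] at this
    exact ((hcont.aemeasurable measurableSet_Icc).mono_measure
      (Measure.restrict_mono Ioc_subset_Icc_self le_rfl))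
  -- the main dominated convergence
  unfold phi
  apply intervalIntegral.tendsto_integral_filter_of_dominated_convergence (fun _ => Mlam)
  · refine Eventually.of_forall fun n => ?_
    rw [uIoc_of_le ht.le]
    have h1 : AEMeasurable (fun s => lam (F n s)) (volume.restrict (Ioc (0:ℝ) t)) :=
      (hlamc.measurable.comp (hFm n)).aemeasurable
    have h2 : AEMeasurable (fun s => kap (F n s)) (volume.restrict (Ioc (0:ℝ) t)) :=
      (hkapc.measurable.comp (hFm n)).aemeasurable
    have h3 := humeas (F n) (hFm n) (hFK n)
    exact (h1.mul
      (Real.measurable_exp.comp_aemeasurable (h2.neg.mul h3))).aestronglyMeasurable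
  · refine Eventually.of_forall fun n => Eventually.of_forall fun s hs => ?_
    rw [uIoc_of_le ht.le] at hs
    have hsI : s ∈ Icc (0:ℝ) t := ⟨hs.1.le, hs.2⟩
    have hexp : Real.exp (-(kap (F n s)) * ∫ r in s..t, mu (F n r)) ≤ 1 := by
      refine Real.exp_le_one_iff.2 ?_
      exact mul_nonpos_of_nonpos_of_nonneg (neg_nonpos.2 (hkap0 _))
        (intervalIntegral.integral_nonneg hs.2 fun r _ => hmu0 _)
    have h0 : 0 ≤ lam (F n s) * Real.exp (-(kap (F n s)) * ∫ r in s..t, mu (F n r)) :=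
      mul_nonneg (hlam0 _) (Real.exp_pos _).le
    rw [Real.norm_of_nonneg h0]
    calc lam (F n s) * Real.exp (-(kap (F n s)) * ∫ r in s..t, mu (F n r))
        ≤ lam (F n s) * 1 := mul_le_mul_of_nonneg_left hexp (hlam0 _)
      _ = lam (F n s) := mul_one _
      _ ≤ ‖lam (F n s)‖ := le_abs_self _
      _ ≤ Mlam := hMlam _ (hFK n s hsI)
  · exact intervalIntegrable_const
  · refine Eventually.of_forall fun s hs => ?_
    rw [uIoc_of_le ht.le] at hs
    have hsI : s ∈ Icc (0:ℝ) t := ⟨hs.1.le, hs.2⟩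
    have h1 : Tendsto (fun n => lam (F n s)) atTop (nhds (lam (f s))) :=
      (hlamc.tendsto _).comp (hunif.tendsto_at hsI)
    have h2 : Tendsto (fun n => kap (F n s)) atTop (nhds (kap (f s))) :=
      (hkapc.tendsto _).comp (hunif.tendsto_at hsI)
    have h3 := hinner s hsI
    exact h1.mul ((Real.continuous_exp.tendsto _).comp (h2.neg.mul h3))
end

section
/- Let x ∈ ℝ, δ > 0, λ ≥ 0, ε > 0 and n ≥ 1. Set λ⁻ = max{0, λ − ε} and λ⁺ = λ + ε, and for γ ≥ 0 let p_n(γ) = Poisson(n·γ)({k ∈ ℕ : |k/n − x| < δ}). Then inf{ p_n(γ) : γ ∈ (λ−ε, λ+ε) ∩ [0,∞) } = inf{ p_n(γ) : γ ∈ ((λ−ε, λ+ε) ∩ [x−δ, x+δ]) ∪ {λ⁻, λ⁺} }. -/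
open MeasureTheory Set
open scoped ENNReal NNReal

open Real ProbabilityTheory


lemma auxF_deriv (k : ℕ) (t : ℝ) :
    HasDerivAt (fun t : ℝ => Real.exp (-t) * t ^ k)
      (Real.exp (-t) * ((k : ℝ) * t ^ (k - 1)) - Real.exp (-t) * t ^ k) t := by
  have h1 : HasDerivAt (fun t : ℝ => Real.exp (-t)) (-Real.exp (-t)) t := by
    simpa [Function.comp_def] using ((Real.hasDerivAt_exp (-t)).comp t (hasDerivAt_neg t))
  have h2 := hasDerivAt_pow k t
  exact (h1.mul h2).congr_deriv (by ring)

lemma auxF_mono (k : ℕ) : MonotoneOn (fun t : ℝ => Real.exp (-t) * t ^ k) (Set.Icc 0 (k : ℝ)) := by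
  rcases Nat.eq_zero_or_pos k with hk | hk
  · subst hk
    simp only [Nat.cast_zero]
    intro a ha b hb hab
    have : a = 0 := le_antisymm ha.2 ha.1
    have hb0 : b = 0 := le_antisymm hb.2 hb.1
    simp [this, hb0]
  · apply monotoneOn_of_deriv_nonneg (convex_Icc _ _)
    · exact ((Real.continuous_exp.comp continuous_neg).mul (continuous_pow k)).continuousOn
    · intro t ht
      exact (auxF_deriv k t).differentiableAt.differentiableWithinAt
    · intro t ht
      rw [interior_Icc] at ht
      rw [(auxF_deriv k t).deriv]
      have h1 : t ^ k = t * t ^ (k - 1) := by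
        conv_lhs => rw [← Nat.succ_pred_eq_of_pos hk]
        rw [pow_succ, Nat.pred_eq_sub_one, mul_comm]
      rw [h1]
      have : t * t ^ (k-1) ≤ (k : ℝ) * t ^ (k-1) :=
        mul_le_mul_of_nonneg_right ht.2.le (pow_nonneg ht.1.le _)
      nlinarith [Real.exp_pos (-t), this, mul_le_mul_of_nonneg_left this (Real.exp_pos (-t)).le]

lemma auxF_anti (k : ℕ) : AntitoneOn (fun t : ℝ => Real.exp (-t) * t ^ k) (Set.Ici (k : ℝ)) := by
  apply antitoneOn_of_deriv_nonpos (convex_Ici _)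
  · exact ((Real.continuous_exp.comp continuous_neg).mul (continuous_pow k)).continuousOn
  · intro t ht
    exact (auxF_deriv k t).differentiableAt.differentiableWithinAt
  · intro t ht
    rw [interior_Ici] at ht
    rw [(auxF_deriv k t).deriv]
    have htpos : 0 < t := lt_of_le_of_lt (Nat.cast_nonneg k) ht
    have h2 : (k : ℝ) * t ^ (k - 1) ≤ t ^ k := by
      rcases Nat.eq_zero_or_pos k with hk | hk
      · simp [hk]
      · have h1 : t ^ k = t * t ^ (k - 1) := by
          conv_lhs => rw [← Nat.succ_pred_eq_of_pos hk]
          rw [pow_succ, Nat.pred_eq_sub_one, mul_comm]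
        rw [h1]
        exact mul_le_mul_of_nonneg_right ht.le (pow_nonneg htpos.le _)
    nlinarith [Real.exp_pos (-t), mul_le_mul_of_nonneg_left h2 (Real.exp_pos (-t)).le]

lemma pmf_mono {k : ℕ} {a b : ℝ≥0} (hab : a ≤ b) (hbk : (b : ℝ) ≤ k) :
    poissonPMFReal a k ≤ poissonPMFReal b k := by
  unfold ProbabilityTheory.poissonPMFReal
  apply div_le_div_of_nonneg_right ?_ (by positivity)
  exact auxF_mono k ⟨a.coe_nonneg, le_trans hab hbk⟩ ⟨b.coe_nonneg, hbk⟩ hab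

lemma pmf_anti {k : ℕ} {a b : ℝ≥0} (hab : a ≤ b) (hka : (k : ℝ) ≤ a) :
    poissonPMFReal b k ≤ poissonPMFReal a k := by
  unfold ProbabilityTheory.poissonPMFReal
  apply div_le_div_of_nonneg_right ?_ (by positivity)
  exact auxF_anti k hka (le_trans hka hab) hab



lemma meas_rep (r : ℝ≥0) (S : Set ℕ) :
    poissonMeasure r S = ∑' k, S.indicator (fun k => ENNReal.ofReal (poissonPMFReal r k)) k := by
  rw [ProbabilityTheory.poissonMeasure, Measure.sum_apply _ (MeasurableSet.of_discrete)]
  congr 1; funext k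
  rw [Measure.smul_apply, Measure.dirac_apply' _ MeasurableSet.of_discrete, smul_eq_mul]
  by_cases hk : k ∈ S <;> simp [hk, poissonPMFReal]

lemma meas_comp {r s : ℝ≥0} {S : Set ℕ}
    (h : ∀ k ∈ S, poissonPMFReal r k ≤ poissonPMFReal s k) :
    poissonMeasure r S ≤ poissonMeasure s S := by
  rw [meas_rep, meas_rep]
  apply ENNReal.tsum_le_tsum
  intro k
  by_cases hk : k ∈ S
  · simp only [Set.indicator_of_mem hk]
    exact ENNReal.ofReal_le_ofReal (h k hk)
  · simp [Set.indicator_of_notMem hk]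

lemma meas_rep_fin (r : ℝ≥0) (S : Set ℕ) (M : ℕ) (hM : ∀ k ∈ S, k < M) :
    poissonMeasure r S
      = ∑ k ∈ Finset.range M, S.indicator (fun k => ENNReal.ofReal (poissonPMFReal r k)) k := by
  rw [meas_rep]
  apply tsum_eq_sum
  intro k hk
  apply Set.indicator_of_notMem
  intro hkS
  exact hk (Finset.mem_range.mpr (hM k hkS))

lemma meas_cont (S : Set ℕ) (M : ℕ) (hM : ∀ k ∈ S, k < M) (c : ℝ) :
    Continuous (fun γ : ℝ => poissonMeasure (Real.toNNReal (c * γ)) S) := by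
  have : (fun γ : ℝ => poissonMeasure (Real.toNNReal (c * γ)) S)
      = fun γ : ℝ => ∑ k ∈ Finset.range M,
          S.indicator (fun k => ENNReal.ofReal (poissonPMFReal (Real.toNNReal (c * γ)) k)) k := by
    funext γ; exact meas_rep_fin _ _ M hM
  rw [this]
  apply continuous_finset_sum
  intro k _
  by_cases hk : k ∈ S
  · simp only [Set.indicator_of_mem hk]
    apply ENNReal.continuous_ofReal.comp
    unfold ProbabilityTheory.poissonPMFReal
    have hc : Continuous fun γ : ℝ => ((Real.toNNReal (c * γ) : ℝ≥0) : ℝ) :=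
      NNReal.continuous_coe.comp (continuous_real_toNNReal.comp (continuous_const.mul continuous_id))
    exact ((Real.continuous_exp.comp hc.neg).mul (hc.pow k)).div_const _
  · simp only [Set.indicator_of_notMem hk]
    exact continuous_const

theorem stmt13 (x δ lam ε : ℝ) (hδ : 0 < δ) (hlam : 0 ≤ lam) (hε : 0 < ε)
    (n : ℕ) (hn : 1 ≤ n) :
    (⨅ γ ∈ Set.Ioo (lam - ε) (lam + ε) ∩ Set.Ici (0 : ℝ),
        ProbabilityTheory.poissonMeasure (Real.toNNReal ((n : ℝ) * γ))
          {k : ℕ | |(k : ℝ) / (n : ℝ) - x| < δ}) =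
    (⨅ γ ∈ (Set.Ioo (lam - ε) (lam + ε) ∩ Set.Icc (x - δ) (x + δ)) ∪
        {max 0 (lam - ε), lam + ε},
        ProbabilityTheory.poissonMeasure (Real.toNNReal ((n : ℝ) * γ))
          {k : ℕ | |(k : ℝ) / (n : ℝ) - x| < δ}) := by
  have hn' : (0 : ℝ) < n := by exact_mod_cast hn
  set S : Set ℕ := {k : ℕ | |(k : ℝ) / (n : ℝ) - x| < δ} with hS
  set F : ℝ → ℝ≥0∞ := fun γ => poissonMeasure (Real.toNNReal ((n : ℝ) * γ)) S with hF
  -- bounds on elements of S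
  have hSup : ∀ k ∈ S, (k : ℝ) < (n : ℝ) * (x + δ) := by
    intro k hk
    have : (k : ℝ) / n - x < δ := (abs_lt.mp hk).2
    rw [div_sub' hn'.ne', div_lt_iff₀ hn'] at this
    nlinarith
  have hSlow : ∀ k ∈ S, (n : ℝ) * (x - δ) < k := by
    intro k hk
    have : -δ < (k : ℝ) / n - x := (abs_lt.mp hk).1
    rw [div_sub' hn'.ne', lt_div_iff₀ hn'] at this
    nlinarith
  have hM : ∀ k ∈ S, k < ⌈(n : ℝ) * (x + δ)⌉₊ + 1 := by
    intro k hk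
    have := hSup k hk
    have h2 : (k : ℝ) ≤ ⌈(n : ℝ) * (x + δ)⌉₊ := le_trans this.le (Nat.le_ceil _)
    exact Nat.lt_succ_of_le (by exact_mod_cast h2)
  have hcont : Continuous F := meas_cont S _ hM (n : ℝ)
  set lamm : ℝ := max 0 (lam - ε) with hlamm
  have hlt : lamm < lam + ε := max_lt (by linarith) (by linarith)
  have hlamm0 : 0 ≤ lamm := le_max_left _ _
  -- monotonicity facts
  have hmonoL : ∀ a b : ℝ, a ≤ b → b ≤ x - δ → F a ≤ F b := by
    intro a b hab hbx
    apply meas_comp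
    intro k hk
    apply pmf_mono (Real.toNNReal_mono (by nlinarith))
    rw [Real.coe_toNNReal']
    exact max_le (by nlinarith [hSlow k hk]) (Nat.cast_nonneg k)
  have hantiR : ∀ a b : ℝ, a ≤ b → x + δ ≤ a → F b ≤ F a := by
    intro a b hab hxa
    apply meas_comp
    intro k hk
    apply pmf_anti (Real.toNNReal_mono (by nlinarith))
    rw [Real.coe_toNNReal']
    refine le_max_of_le_left ?_
    nlinarith [hSup k hk]
  apply le_antisymm
  · -- key closure argument
    refine le_iInf₂ fun γ hγ => ?_
    have key : ∀ y ∈ Set.Icc lamm (lam + ε),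
        (⨅ γ ∈ Set.Ioo (lam - ε) (lam + ε) ∩ Set.Ici (0 : ℝ), F γ) ≤ F y := by
      have hclosed : IsClosed {y : ℝ |
          (⨅ γ ∈ Set.Ioo (lam - ε) (lam + ε) ∩ Set.Ici (0 : ℝ), F γ) ≤ F y} :=
        isClosed_le continuous_const hcont
      have hsub : Set.Ioo lamm (lam + ε) ⊆ {y : ℝ |
          (⨅ γ ∈ Set.Ioo (lam - ε) (lam + ε) ∩ Set.Ici (0 : ℝ), F γ) ≤ F y} := by
        intro y hy
        have hmem : y ∈ Set.Ioo (lam - ε) (lam + ε) ∩ Set.Ici (0 : ℝ) :=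
          ⟨⟨lt_of_le_of_lt (le_max_right 0 (lam - ε)) hy.1, hy.2⟩,
            le_of_lt (lt_of_le_of_lt hlamm0 hy.1)⟩
        show (⨅ γ ∈ Set.Ioo (lam - ε) (lam + ε) ∩ Set.Ici (0 : ℝ), F γ) ≤ F y
        exact iInf₂_le y hmem
      intro y hy
      have h2 := closure_mono hsub
      rw [closure_Ioo hlt.ne, hclosed.closure_eq] at h2
      exact h2 hy
    rcases hγ with hγ | hγ
    · rcases le_or_gt 0 γ with h0 | h0
      · exact iInf₂_le γ ⟨hγ.1, h0⟩
      · have hFγ : F γ = F 0 := by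
          simp only [hF]
          congr 1
          rw [mul_zero, Real.toNNReal_zero, Real.toNNReal_of_nonpos (by nlinarith)]
        have hmem : (0:ℝ) ∈ Set.Ioo (lam - ε) (lam + ε) ∩ Set.Ici (0 : ℝ) :=
          ⟨⟨by linarith [hγ.1.1], by linarith⟩, Set.self_mem_Ici⟩
        exact le_trans (iInf₂_le 0 hmem) hFγ.symm.le
    · rcases hγ with hγ | hγ
      · rw [hγ]; exact key lamm ⟨le_refl _, hlt.le⟩
      · rw [Set.mem_singleton_iff.mp hγ]
        exact key (lam + ε) ⟨hlt.le, le_refl _⟩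
  · refine le_iInf₂ fun γ hγ => ?_
    obtain ⟨⟨hγ1, hγ2⟩, hγ0⟩ := hγ
    rcases lt_or_ge γ (x - δ) with hc1 | hc1
    · calc (⨅ γ ∈ (Set.Ioo (lam - ε) (lam + ε) ∩ Set.Icc (x - δ) (x + δ)) ∪
            {max 0 (lam - ε), lam + ε}, F γ) ≤ F lamm :=
            iInf₂_le lamm (Or.inr (Set.mem_insert _ _))
        _ ≤ F γ := hmonoL lamm γ (max_le hγ0 hγ1.le) hc1.le
    · rcases le_or_gt γ (x + δ) with hc2 | hc2
      · exact iInf₂_le γ (Or.inl ⟨⟨hγ1, hγ2⟩, hc1, hc2⟩)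
      · calc (⨅ γ ∈ (Set.Ioo (lam - ε) (lam + ε) ∩ Set.Icc (x - δ) (x + δ)) ∪
            {max 0 (lam - ε), lam + ε}, F γ) ≤ F (lam + ε) :=
            iInf₂_le (lam + ε) (Or.inr (Set.mem_insert_iff.mpr (Or.inr rfl)))
          _ ≤ F γ := hantiR γ (lam + ε) hγ2.le hc2.le
end

section
/- Let F ⊆ ℝ be closed and define f : [0,∞) → [−∞,0] by f(γ) = −inf_{a∈F} ℓ(γ;a) (with inf over the empty set equal to ∞). Then: (i) if F ⊆ (−∞,0), then f(γ) = −∞ for all γ ≥ 0; (ii) if F ∩ [0,∞) ≠ ∅, then f is real-valued and continuous on (0,∞), and f(γ) → f(0) as γ ↓ 0, where f(0) = 0 if 0 ∈ F and f(0) = −∞ if 0 ∉ F; (iii) in any case, for all real numbers a, b with a ≤ b ≤ 0, the set f⁻¹([a,b]) is a closed subset of [0,∞). -/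
open MeasureTheory Set
open scoped ENNReal NNReal

noncomputable def gR (γ a : ℝ) : ℝ := γ - a + a * Real.log (a / γ)

lemma gR_zero (γ : ℝ) : gR γ 0 = γ := by simp [gR]

lemma gR_nonneg {γ a : ℝ} (hγ : 0 < γ) (ha : 0 ≤ a) : 0 ≤ gR γ a := by
  rcases ha.eq_or_lt with rfl | ha
  · rw [gR_zero]; exact hγ.le
  · have h := Real.one_sub_inv_le_log_of_pos (div_pos ha hγ)
    rw [inv_div] at h
    have h2 := mul_le_mul_of_nonneg_left h ha.le
    have h3 : a * (γ / a) = γ := by field_simp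
    rw [mul_sub, mul_one, h3] at h2
    unfold gR; linarith

lemma ell_eq {γ a : ℝ} (hγ : 0 < γ) (ha : 0 ≤ a) : ell γ a = ENNReal.ofReal (gR γ a) := by
  rcases ha.eq_or_lt with rfl | ha
  · simp [ell, gR_zero]
  · simp [ell, not_lt.mpr ha.le, ha.ne', hγ.ne', gR]

lemma ell_coe {γ a : ℝ} (hγ : 0 < γ) (ha : 0 ≤ a) :
    ((ell γ a : ℝ≥0∞) : EReal) = ((gR γ a : ℝ) : EReal) := by
  rw [ell_eq hγ ha, EReal.coe_ennreal_ofReal, max_eq_left (gR_nonneg hγ ha)]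

lemma ell_top {γ a : ℝ} (ha : a < 0) : ell γ a = ⊤ := by simp [ell, ha]

lemma bddBelow_gR {γ : ℝ} (hγ : 0 < γ) (C : Set ℝ) (hC0 : C ⊆ Ici 0) :
    BddBelow (gR γ '' C) :=
  ⟨0, by rintro x ⟨a, ha, rfl⟩; exact gR_nonneg hγ (hC0 ha)⟩

lemma inf_eq {F : Set ℝ} (hC : (F ∩ Ici 0).Nonempty) {γ : ℝ} (hγ : 0 < γ) :
    (⨅ a ∈ F, (ell γ a : EReal)) = ((sInf (gR γ '' (F ∩ Ici 0)) : ℝ) : EReal) := by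
  set C := F ∩ Ici 0 with hCdef
  have hC0 : C ⊆ Ici 0 := inter_subset_right
  have hbdd := bddBelow_gR hγ C hC0
  apply le_antisymm
  · by_contra hlt
    push_neg at hlt
    obtain ⟨r, hr1, hr2⟩ := EReal.exists_between_coe_real hlt
    have hrm : (r : ℝ) ≤ sInf (gR γ '' C) := by
      apply le_csInf (hC.image _)
      rintro x ⟨a, haC, rfl⟩
      have h1 : (⨅ a ∈ F, (ell γ a : EReal)) ≤ (ell γ a : EReal) := iInf₂_le a haC.1
      rw [ell_coe hγ (hC0 haC)] at h1
      exact_mod_cast (hr2.trans_le h1).le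
    have hm : sInf (gR γ '' C) < r := by exact_mod_cast hr1
    exact absurd hrm (not_le.mpr hm)
  · apply le_iInf; intro a; apply le_iInf; intro haF
    rcases lt_or_ge a 0 with ha | ha
    · rw [ell_top ha]; exact le_top
    · rw [ell_coe hγ ha]
      exact_mod_cast csInf_le hbdd ⟨a, ⟨haF, ha⟩, rfl⟩

lemma f_eq {F : Set ℝ} (hC : (F ∩ Ici 0).Nonempty) {γ : ℝ} (hγ : 0 < γ) :
    -(⨅ a ∈ F, (ell γ a : EReal)) = ((-(sInf (gR γ '' (F ∩ Ici 0))) : ℝ) : EReal) := by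
  rw [inf_eq hC hγ, ← EReal.coe_neg]

lemma abs_log_lip {c x y : ℝ} (hc : 0 < c) (hx : c ≤ x) (hy : c ≤ y) :
    |Real.log x - Real.log y| ≤ |x - y| / c := by
  wlog h : y ≤ x
  · rw [abs_sub_comm, abs_sub_comm x y]; exact this hc hy hx (le_of_not_ge h)
  have hx0 : 0 < x := hc.trans_le hx
  have hy0 : 0 < y := hc.trans_le hy
  have hlog : Real.log x - Real.log y = Real.log (x / y) := (Real.log_div hx0.ne' hy0.ne').symm
  have h1 : Real.log (x / y) ≤ x / y - 1 := Real.log_le_sub_one_of_pos (div_pos hx0 hy0)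
  have h2 : (0:ℝ) ≤ Real.log (x / y) := Real.log_nonneg ((le_div_iff₀ hy0).mpr (by linarith))
  rw [hlog, abs_of_nonneg h2, abs_of_nonneg (by linarith : (0:ℝ) ≤ x - y)]
  have h3 : x / y - 1 = (x - y) / y := by field_simp
  have h4 : (x - y) / y ≤ (x - y) / c := by
    apply div_le_div_of_nonneg_left (by linarith) hc hy
  linarith

lemma gR_diff {γ γ' a : ℝ} (hγ : 0 < γ) (hγ' : 0 < γ') (ha : 0 ≤ a) :
    gR γ a - gR γ' a = (γ - γ') - a * (Real.log γ - Real.log γ') := by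
  rcases ha.eq_or_lt with rfl | ha
  · simp [gR_zero]
  · unfold gR
    rw [Real.log_div ha.ne' hγ.ne', Real.log_div ha.ne' hγ'.ne']
    ring

lemma gR_lip {γ γ' a M c : ℝ} (hc : 0 < c) (hγ : c ≤ γ) (hγ' : c ≤ γ')
    (ha : 0 ≤ a) (haM : a ≤ M) :
    |gR γ a - gR γ' a| ≤ (1 + M / c) * |γ - γ'| := by
  rw [gR_diff (hc.trans_le hγ) (hc.trans_le hγ') ha]
  have h1 := abs_log_lip hc hγ hγ'
  have h2 : a * |Real.log γ - Real.log γ'| ≤ M / c * |γ - γ'| := by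
    calc a * |Real.log γ - Real.log γ'| ≤ M * (|γ - γ'| / c) :=
          mul_le_mul haM h1 (abs_nonneg _) (ha.trans haM)
      _ = M / c * |γ - γ'| := by ring
  calc |(γ - γ') - a * (Real.log γ - Real.log γ')|
      ≤ |γ - γ'| + |a * (Real.log γ - Real.log γ')| := abs_sub _ _
    _ = |γ - γ'| + a * |Real.log γ - Real.log γ'| := by rw [abs_mul, abs_of_nonneg ha]
    _ ≤ |γ - γ'| + M / c * |γ - γ'| := by linarith
    _ = (1 + M / c) * |γ - γ'| := by ring

lemma gR_tail {γ a B G : ℝ} (hγ : 0 < γ) (hγG : γ ≤ G) (hB : 0 ≤ B)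
    (ha : max 1 (G * Real.exp (2 + B)) ≤ a) : B + 1 ≤ gR γ a := by
  have hG : 0 < G := lt_of_lt_of_le hγ hγG
  have ha1 : (1:ℝ) ≤ a := le_trans (le_max_left _ _) ha
  have ha0 : 0 < a := lt_of_lt_of_le one_pos ha1
  have h1 : Real.exp (2 + B) ≤ a / γ := by
    rw [le_div_iff₀ hγ]
    have h2 := le_trans (le_max_right 1 _) ha
    nlinarith [Real.exp_pos (2 + B)]
  have h2 : 2 + B ≤ Real.log (a / γ) :=
    (Real.le_log_iff_exp_le (div_pos ha0 hγ)).mpr h1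
  have h3 := mul_le_mul_of_nonneg_left h2 ha0.le
  unfold gR
  nlinarith

lemma m_contAt {C : Set ℝ} (hC : C.Nonempty) (hC0 : C ⊆ Ici 0) {γ₀ : ℝ} (h0 : 0 < γ₀) :
    ContinuousAt (fun γ => sInf (gR γ '' C)) γ₀ := by
  obtain ⟨a₀, ha₀⟩ := hC
  set B := max (gR γ₀ a₀) 0 with hBdef
  have hB : 0 ≤ B := le_max_right _ _
  set G := 2 * γ₀ with hGdef
  set M := max 1 (G * Real.exp (2 + B)) with hMdef
  have hM1 : (1:ℝ) ≤ M := le_max_left _ _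
  set L := 1 + M / (γ₀ / 2) with hLdef
  have hL : 0 < L := by
    have : 0 ≤ M / (γ₀ / 2) := div_nonneg (by linarith) (by linarith)
    rw [hLdef]; linarith
  rw [Metric.continuousAt_iff]
  intro ε hε
  set E := min (ε / 2) (1 / 2) with hEdef
  have hE0 : 0 < E := lt_min (by linarith) (by norm_num)
  have hE1 : E ≤ 1 / 2 := min_le_right _ _
  have hEε : E ≤ ε / 2 := min_le_left _ _
  refine ⟨min (γ₀ / 2) (E / L), lt_min (by linarith) (div_pos hE0 hL), ?_⟩
  intro γ hγd
  rw [Real.dist_eq] at hγd ⊢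
  have hd1 : |γ - γ₀| < γ₀ / 2 := lt_of_lt_of_le hγd (min_le_left _ _)
  have hd2 : |γ - γ₀| < E / L := lt_of_lt_of_le hγd (min_le_right _ _)
  have habs1 := abs_lt.mp hd1
  have hγlb : γ₀ / 2 ≤ γ := by linarith [habs1.1]
  have hγub : γ ≤ G := by rw [hGdef]; linarith [habs1.2]
  have hγ0 : 0 < γ := lt_of_lt_of_le (by linarith) hγlb
  have hγ₀lb : γ₀ / 2 ≤ γ₀ := by linarith
  have hγ₀ub : γ₀ ≤ G := by rw [hGdef]; linarith
  have himg : ∀ γ' : ℝ, (gR γ' '' C).Nonempty := fun γ' => ⟨_, ⟨a₀, ha₀, rfl⟩⟩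
  have hmB : sInf (gR γ₀ '' C) ≤ B :=
    le_trans (csInf_le (bddBelow_gR h0 C hC0) ⟨a₀, ha₀, rfl⟩) (le_max_left _ _)
  have hLd : L * |γ - γ₀| < E := by
    have := (lt_div_iff₀ hL).mp hd2
    linarith
  have hlow : sInf (gR γ₀ '' C) - E ≤ sInf (gR γ '' C) := by
    apply le_csInf (himg γ)
    rintro x ⟨a, haC, rfl⟩
    have ha0 : 0 ≤ a := hC0 haC
    rcases le_or_gt a M with haM | haM
    · have hlip := gR_lip (by linarith : (0:ℝ) < γ₀ / 2) hγlb hγ₀lb ha0 haM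
      have hm0 := csInf_le (bddBelow_gR h0 C hC0) ⟨a, haC, rfl⟩
      have h5 := abs_le.mp hlip
      rw [← hLdef] at h5
      linarith [h5.1]
    · have := gR_tail hγ0 hγub hB haM.le
      linarith
  have hup : sInf (gR γ '' C) < sInf (gR γ₀ '' C) + 2 * E := by
    obtain ⟨x, ⟨a₁, ha₁C, rfl⟩, hx⟩ :=
      exists_lt_of_csInf_lt (himg γ₀) (lt_add_of_pos_right (sInf (gR γ₀ '' C)) hE0)
    have ha₁0 : 0 ≤ a₁ := hC0 ha₁C
    have ha₁M : a₁ ≤ M := by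
      by_contra hcon
      push_neg at hcon
      have := gR_tail h0 hγ₀ub hB hcon.le
      linarith
    have hlip := gR_lip (by linarith : (0:ℝ) < γ₀ / 2) hγlb hγ₀lb ha₁0 ha₁M
    have hmle := csInf_le (bddBelow_gR hγ0 C hC0) ⟨a₁, ha₁C, rfl⟩
    have h5 := abs_le.mp hlip
    rw [← hLdef] at h5
    linarith [h5.2]
  rw [abs_lt]
  constructor <;> linarith

lemma f_contAt {F : Set ℝ} (hC : (F ∩ Ici 0).Nonempty) {γ₀ : ℝ} (h0 : 0 < γ₀) :
    ContinuousAt (fun γ : ℝ => -(⨅ a ∈ F, (ell γ a : EReal))) γ₀ := by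
  have hcont : ContinuousAt
      (fun γ : ℝ => ((-(sInf (gR γ '' (F ∩ Ici 0))) : ℝ) : EReal)) γ₀ :=
    continuous_coe_real_ereal.continuousAt.comp
      ((m_contAt hC inter_subset_right h0).neg)
  apply hcont.congr
  filter_upwards [Ioi_mem_nhds h0] with γ hγ
  exact (f_eq hC hγ).symm

lemma inf0 {F : Set ℝ} (h0F : (0:ℝ) ∈ F) :
    -(⨅ a ∈ F, (ell (0:ℝ) a : EReal)) = 0 := by
  have h1 : (⨅ a ∈ F, (ell (0:ℝ) a : EReal)) = 0 := by
    apply le_antisymm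
    · have : (ell (0:ℝ) 0 : EReal) = 0 := by simp [ell]
      exact le_trans (iInf₂_le 0 h0F) this.le
    · exact le_iInf fun a => le_iInf fun _ => EReal.coe_ennreal_nonneg _
  rw [h1, neg_zero]

lemma inf_top {F : Set ℝ} (hF : (F ∩ Ici 0) = ∅) (γ : ℝ) :
    -(⨅ a ∈ F, (ell γ a : EReal)) = ⊥ := by
  have h1 : (⨅ a ∈ F, (ell γ a : EReal)) = ⊤ := by
    apply le_antisymm le_top
    apply le_iInf; intro a; apply le_iInf; intro haF
    have ha : a < 0 := by
      by_contra h; push_neg at h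
      have hmem : a ∈ F ∩ Ici 0 := ⟨haF, h⟩
      rw [hF] at hmem
      exact hmem.elim
    rw [ell_top ha, EReal.coe_ennreal_top]
  rw [h1]; rfl

open Classical in
lemma f_tendsto {F : Set ℝ} (hFc : IsClosed F) (hC : (F ∩ Ici 0).Nonempty) :
    Filter.Tendsto (fun γ : ℝ => -(⨅ a ∈ F, (ell γ a : EReal)))
      (nhdsWithin 0 (Set.Ioi 0))
      (nhds (if 0 ∈ F then (0 : EReal) else ⊥)) := by
  by_cases h0F : (0:ℝ) ∈ F
  · rw [if_pos h0F]
    have hm : Filter.Tendsto (fun γ : ℝ => sInf (gR γ '' (F ∩ Ici 0)))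
        (nhdsWithin 0 (Set.Ioi 0)) (nhds 0) := by
      refine squeeze_zero' ?_ ?_
        ((Filter.tendsto_id : Filter.Tendsto (fun γ : ℝ => γ) (nhds (0:ℝ)) (nhds 0)).mono_left
          nhdsWithin_le_nhds)
      · filter_upwards [self_mem_nhdsWithin] with γ hγ
        exact le_csInf (hC.image (gR γ))
          (by rintro x ⟨a, haC, rfl⟩; exact gR_nonneg hγ haC.2)
      · filter_upwards [self_mem_nhdsWithin] with γ hγ
        have hmem : gR γ 0 ∈ gR γ '' (F ∩ Ici 0) := ⟨0, ⟨h0F, Set.self_mem_Ici⟩, rfl⟩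
        have h2 := csInf_le (bddBelow_gR hγ _ inter_subset_right) hmem
        rwa [gR_zero] at h2
    have : Filter.Tendsto (fun γ : ℝ => ((-(sInf (gR γ '' (F ∩ Ici 0))) : ℝ) : EReal))
        (nhdsWithin 0 (Set.Ioi 0)) (nhds ((0:ℝ) : EReal)) :=
      EReal.tendsto_coe.mpr (by simpa using hm.neg)
    rw [show ((0:ℝ) : EReal) = 0 from rfl] at this
    apply this.congr'
    filter_upwards [self_mem_nhdsWithin] with γ hγ
    exact (f_eq hC hγ).symm
  · rw [if_neg h0F]
    set C := F ∩ Ici 0 with hCdef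
    have hCc : IsClosed C := hFc.inter isClosed_Ici
    have hCb : BddBelow C := ⟨0, fun a ha => ha.2⟩
    set c := sInf C with hcdef
    have hcC : c ∈ C := hCc.csInf_mem hC hCb
    have hc0 : 0 < c := lt_of_le_of_ne hcC.2 (fun h => h0F (by rw [← h] at hcC; exact hcC.1))
    -- lower bound on m γ for γ ∈ Ioo 0 1
    have key : ∀ γ : ℝ, γ ∈ Ioo (0:ℝ) 1 → -1 - c * Real.log γ ≤ sInf (gR γ '' C) := by
      intro γ hγ
      apply le_csInf (hC.image (gR γ))
      rintro x ⟨a, haC, rfl⟩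
      have hac : c ≤ a := csInf_le hCb haC
      have ha0 : 0 < a := lt_of_lt_of_le hc0 hac
      have h1 : a - 1 ≤ a * Real.log a := by
        have := Real.one_sub_inv_le_log_of_pos ha0
        have h2 := mul_le_mul_of_nonneg_left this ha0.le
        have h3 : a * a⁻¹ = 1 := mul_inv_cancel₀ ha0.ne'
        nlinarith
      have hlogγ : Real.log γ < 0 := Real.log_neg hγ.1 hγ.2
      have h4 : a * (-Real.log γ) ≥ c * (-Real.log γ) :=
        mul_le_mul_of_nonneg_right hac (by linarith)
      have h5 : gR γ a = γ - a + a * Real.log a - a * Real.log γ := by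
        unfold gR; rw [Real.log_div ha0.ne' hγ.1.ne']; ring
      rw [h5]
      nlinarith [hγ.1.le]
    have hlog : Filter.Tendsto (fun γ : ℝ => -1 - c * Real.log γ)
        (nhdsWithin 0 (Set.Ioi 0)) Filter.atTop := by
      have h1 : Filter.Tendsto (fun γ : ℝ => c * Real.log γ)
          (nhdsWithin 0 (Set.Ioi 0)) Filter.atBot :=
        Real.tendsto_log_nhdsGT_zero.const_mul_atBot hc0
      have h2 := Filter.tendsto_neg_atBot_atTop.comp h1
      have h3 := Filter.tendsto_atTop_add_const_left _ (-1 : ℝ) h2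
      apply h3.congr
      intro γ; simp [Function.comp]; ring
    have hm : Filter.Tendsto (fun γ : ℝ => sInf (gR γ '' C))
        (nhdsWithin 0 (Set.Ioi 0)) Filter.atTop := by
      apply Filter.tendsto_atTop_mono' _ _ hlog
      filter_upwards [Ioo_mem_nhdsGT_of_mem (by constructor <;> norm_num :
        (0:ℝ) ∈ Ico (0:ℝ) 1)] with γ hγ
      exact key γ hγ
    rw [EReal.tendsto_nhds_bot_iff_real]
    intro x
    filter_upwards [self_mem_nhdsWithin, hm.eventually (Filter.eventually_gt_atTop (-x))]
      with γ hγ hmx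
    rw [f_eq hC hγ]
    exact_mod_cast (by linarith : -(sInf (gR γ '' C)) < x)


open Classical in
theorem stmt16 (F : Set ℝ) (hF : IsClosed F) :
    (F ⊆ Set.Iio 0 → ∀ γ : ℝ, 0 ≤ γ → -(⨅ a ∈ F, (ell γ a : EReal)) = ⊥) ∧
    ((F ∩ Set.Ici 0).Nonempty →
      (∀ γ : ℝ, 0 < γ → ∃ r : ℝ, -(⨅ a ∈ F, (ell γ a : EReal)) = (r : EReal)) ∧
      ContinuousOn (fun γ : ℝ => -(⨅ a ∈ F, (ell γ a : EReal))) (Set.Ioi 0) ∧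
      Filter.Tendsto (fun γ : ℝ => -(⨅ a ∈ F, (ell γ a : EReal)))
        (nhdsWithin 0 (Set.Ioi 0))
        (nhds (if 0 ∈ F then (0 : EReal) else ⊥))) ∧
    (∀ a b : ℝ, a ≤ b → b ≤ 0 →
      IsClosed {γ : ℝ | 0 ≤ γ ∧
        -(⨅ x ∈ F, (ell γ x : EReal)) ∈ Set.Icc (a : EReal) (b : EReal)}) := by
  refine ⟨?_, ?_, ?_⟩
  · intro hsub γ _
    apply inf_top
    ext a
    simp only [mem_inter_iff, mem_empty_iff_false, iff_false, not_and]
    intro haF ha0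
    exact absurd (hsub haF) (not_lt.mpr (mem_Ici.mp ha0))
  · intro hC
    refine ⟨?_, ?_, f_tendsto hF hC⟩
    · intro γ hγ
      exact ⟨-(sInf (gR γ '' (F ∩ Ici 0))), f_eq hC hγ⟩
    · intro γ₀ hγ₀
      exact (f_contAt hC hγ₀).continuousWithinAt
  · intro a b hab hb0
    set S : Set ℝ := {γ : ℝ | 0 ≤ γ ∧
        -(⨅ x ∈ F, (ell γ x : EReal)) ∈ Set.Icc (a : EReal) (b : EReal)} with hS
    by_cases hC : (F ∩ Ici 0).Nonempty
    · have hSsub : S ⊆ Ici 0 := fun γ hγ => hγ.1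
      apply isClosed_of_closure_subset
      intro x₀ hx₀
      have hx0 : (0:ℝ) ≤ x₀ := closure_minimal hSsub isClosed_Ici hx₀
      rcases hx0.eq_or_lt with h | h
      · by_cases h0S : (0:ℝ) ∈ S
        · rwa [← h]
        · have hSsub' : S ⊆ Ioi 0 := by
            intro γ hγ
            rcases (mem_Ici.mp (hSsub hγ)).lt_or_eq with h1 | h1
            · exact h1
            · exact absurd (h1 ▸ hγ) h0S
          have hne : (nhdsWithin (0:ℝ) S).NeBot :=
            mem_closure_iff_nhdsWithin_neBot.mp (h ▸ hx₀)
          have htd : Filter.Tendsto (fun γ : ℝ => -(⨅ x ∈ F, (ell γ x : EReal)))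
              (nhdsWithin 0 S) (nhds (if 0 ∈ F then (0:EReal) else ⊥)) :=
            (f_tendsto hF hC).mono_left (nhdsWithin_mono _ hSsub')
          have hev : ∀ᶠ γ in nhdsWithin (0:ℝ) S,
              (fun γ : ℝ => -(⨅ x ∈ F, (ell γ x : EReal))) γ
                ∈ Icc (a : EReal) (b : EReal) := by
            filter_upwards [self_mem_nhdsWithin] with γ hγ
            exact hγ.2
          have hmem := isClosed_Icc.mem_of_tendsto htd hev
          by_cases h0F : (0:ℝ) ∈ F
          · rw [if_pos h0F] at hmem
            rw [← h]
            exact ⟨le_rfl, by rw [inf0 h0F]; exact hmem⟩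
          · rw [if_neg h0F] at hmem
            exact absurd (le_bot_iff.mp hmem.1) (EReal.coe_ne_bot a)
      · have hca := f_contAt hC h
        have himg := mem_closure_image hca hx₀
        have hsub2 : (fun γ : ℝ => -(⨅ x ∈ F, (ell γ x : EReal))) '' S
            ⊆ Icc (a : EReal) (b : EReal) := by
          rintro y ⟨γ, hγ, rfl⟩; exact hγ.2
        exact ⟨hx0, (closure_minimal hsub2 isClosed_Icc) himg⟩
    · have hCe : F ∩ Ici 0 = ∅ := not_nonempty_iff_eq_empty.mp hC
      have hSe : S = ∅ := by
        ext γ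
        simp only [hS, mem_setOf_eq, mem_empty_iff_false, iff_false, not_and]
        intro hγ0 hmem
        rw [inf_top hCe γ] at hmem
        exact absurd (le_bot_iff.mp hmem.1) (EReal.coe_ne_bot a)
      rw [hSe]
      exact isClosed_empty
end

section
/- Let R be a nonempty closed subset of [0,∞) and let ψ : ℝ → [0,∞] be lower semicontinuous. Then the function I : ℝ → [0,∞] defined by I(a) = inf_{γ∈R} [ℓ(γ;a) + ψ(γ)] is lower semicontinuous. -/
open MeasureTheory Set
open scoped ENNReal NNReal

open Filter Topology

/-- Auxiliary continuous minorant of `ell`. -/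
noncomputable def ellG (p : ℝ × ℝ) : ℝ :=
  p.1 - p.2 + (p.2 * Real.log p.2 - p.2 * Real.log p.1)

lemma ofReal_ellG_le (γ a : ℝ) : ENNReal.ofReal (ellG (γ, a)) ≤ ell γ a := by
  unfold ell ellG
  rcases lt_trichotomy a 0 with ha | ha | ha
  · simp [ha]
  · subst ha; simp
  · rw [if_neg (not_lt.mpr ha.le), if_neg ha.ne']
    rcases eq_or_ne γ 0 with hγ | hγ
    · simp [hγ]
    · rw [if_neg hγ]
      apply le_of_eq
      congr 1
      rw [Real.log_div ha.ne' hγ]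
      ring

lemma ellG_eq (γ a : ℝ) (hγ : 0 < γ) (ha : 0 ≤ a) :
    ell γ a = ENNReal.ofReal (ellG (γ, a)) := by
  unfold ell ellG
  rcases eq_or_lt_of_le ha with ha | ha
  · simp [← ha]
  · rw [if_neg (not_lt.mpr ha.le), if_neg ha.ne', if_neg hγ.ne']
    congr 1
    rw [Real.log_div ha.ne' hγ.ne']
    ring

lemma ellG_continuousAt (γ a : ℝ) (hγ : 0 < γ) : ContinuousAt ellG (γ, a) := by
  unfold ellG
  apply ContinuousAt.add
  · exact (continuousAt_fst.sub continuousAt_snd)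
  · apply ContinuousAt.sub
    · exact (Real.continuous_mul_log.comp continuous_snd).continuousAt
    · exact continuousAt_snd.mul (ContinuousAt.comp (g := Real.log) (x := (γ, a)) (Real.continuousAt_log hγ.ne') continuousAt_fst)

/-- `x log x ≥ x - 1` for `x > 0`. -/
lemma mul_log_ge (a : ℝ) (ha : 0 < a) : a - 1 ≤ a * Real.log a := by
  have h := Real.log_le_sub_one_of_pos (inv_pos.mpr ha)
  rw [Real.log_inv] at h
  have : 1 - a⁻¹ ≤ Real.log a := by linarith
  have := mul_le_mul_of_nonneg_left this ha.le
  rw [mul_sub, mul_inv_cancel₀ ha.ne', mul_one] at this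
  linarith

/-- `log γ ≤ 2 √γ` for `γ > 0`. -/
lemma log_le_two_sqrt (γ : ℝ) (hγ : 0 < γ) : Real.log γ ≤ 2 * Real.sqrt γ := by
  have hs : 0 < Real.sqrt γ := Real.sqrt_pos.mpr hγ
  have h := Real.log_le_sub_one_of_pos hs
  have hm : Real.sqrt γ * Real.sqrt γ = γ := Real.mul_self_sqrt hγ.le
  have hsq : Real.log γ = Real.log (Real.sqrt γ) + Real.log (Real.sqrt γ) := by
    rw [← Real.log_mul hs.ne' hs.ne', hm]
  rw [hsq]; nlinarith

/-- Coercivity: for `γ` large, `ell γ a` is large, uniformly over `a ≤ M`. -/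
lemma ell_coercive (M r : ℝ) (hM : 0 ≤ M) :
    ∃ K : ℝ, ∀ γ : ℝ, K ≤ γ → ∀ a : ℝ, a ≤ M → ENNReal.ofReal r ≤ ell γ a := by
  set t₀ : ℝ := 3 * M + |r| + 2 with ht₀def
  have ht₀ : 1 ≤ t₀ := by nlinarith [abs_nonneg r]
  refine ⟨t₀ ^ 2, fun γ hγ a haM => ?_⟩
  have ht₀0 : 0 ≤ t₀ := by linarith
  have hγ1 : 1 ≤ γ := le_trans (by nlinarith) hγ
  have hγ0 : 0 < γ := by linarith
  have hst : t₀ ≤ Real.sqrt γ := by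
    rw [show t₀ = Real.sqrt (t₀ ^ 2) from (Real.sqrt_sq ht₀0).symm]
    exact Real.sqrt_le_sqrt hγ
  have hs0 : 0 ≤ Real.sqrt γ := Real.sqrt_nonneg γ
  have hsq : Real.sqrt γ ^ 2 = γ := Real.sq_sqrt hγ0.le
  -- the key real bound: r ≤ γ - 2 M √γ - (M + 1)
  have hB : r ≤ γ - 2 * M * Real.sqrt γ - (M + 1) := by
    have habs : r ≤ |r| := le_abs_self r
    have habs0 : 0 ≤ |r| := abs_nonneg r
    have hx : 0 ≤ (Real.sqrt γ - t₀) * (Real.sqrt γ + t₀ - 2 * M) :=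
      mul_nonneg (by linarith) (by nlinarith)
    nlinarith [hx, hsq, habs, habs0, hM, sq_nonneg r, mul_nonneg hM habs0, sq_nonneg M]
  -- show ofReal r ≤ ell γ a in each case
  unfold ell
  rcases lt_trichotomy a 0 with ha | ha | ha
  · simp [ha]
  · subst ha
    simp only [lt_irrefl, if_neg, if_pos rfl, if_false]
    exact ENNReal.ofReal_le_ofReal (by nlinarith)
  · rw [if_neg (not_lt.mpr ha.le), if_neg ha.ne', if_neg hγ0.ne']
    apply ENNReal.ofReal_le_ofReal
    have h1 : a - 1 ≤ a * Real.log a := mul_log_ge a ha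
    have h2 : a * Real.log γ ≤ 2 * M * Real.sqrt γ := by
      have hlγ : 0 ≤ Real.log γ := Real.log_nonneg hγ1
      have := log_le_two_sqrt γ hγ0
      nlinarith
    rw [Real.log_div ha.ne' hγ0.ne']
    nlinarith

/-- Joint lower semicontinuity of `ell` within `{γ ≥ 0}`. -/
lemma ell_lscWithin (γ₀ a₀ : ℝ) (hγ₀ : 0 ≤ γ₀) :
    LowerSemicontinuousWithinAt (fun p : ℝ × ℝ => ell p.1 p.2)
      (Set.Ici (0:ℝ) ×ˢ (Set.univ : Set ℝ)) (γ₀, a₀) := by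
  intro c hc
  have hc : c < ell γ₀ a₀ := hc
  rcases lt_trichotomy a₀ 0 with ha₀ | ha₀ | ha₀
  case inl =>
    -- a₀ < 0 : nearby points have a < 0, so ell = ⊤
    have hC : c < ⊤ := lt_of_lt_of_le hc le_top
    have hopen : IsOpen {p : ℝ × ℝ | p.2 < 0} := isOpen_lt continuous_snd continuous_const
    filter_upwards [nhdsWithin_le_nhds (hopen.mem_nhds (by exact ha₀))] with p hp
    simp only [ell, if_pos hp]
    exact hC
  case inr.inr =>
    -- a₀ > 0
    rcases eq_or_lt_of_le hγ₀ with hγ₀' | hγ₀'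
    · -- γ₀ = 0, a₀ > 0 : ell γ₀ a₀ = ⊤
      have hC : c < ⊤ := lt_of_lt_of_le hc le_top
      set r : ℝ := c.toReal with hr
      set L : ℝ := (2 / a₀) * (|r| + a₀ + 2) with hL
      have hL0 : 0 ≤ L := by positivity
      set δ : ℝ := (a₀ / 2) * Real.exp (-L) with hδ
      have hδ0 : 0 < δ := by positivity
      have hopen : IsOpen {p : ℝ × ℝ | p.1 < δ ∧ a₀ / 2 < p.2 ∧ p.2 < a₀ + 1} := by
        apply IsOpen.inter (isOpen_lt continuous_fst continuous_const)
        exact IsOpen.inter (isOpen_lt continuous_const continuous_snd)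
          (isOpen_lt continuous_snd continuous_const)
      have hmem : (γ₀, a₀) ∈ {p : ℝ × ℝ | p.1 < δ ∧ a₀ / 2 < p.2 ∧ p.2 < a₀ + 1} := by
        refine ⟨?_, by linarith, by linarith⟩
        simp only [← hγ₀']
        exact hδ0
      filter_upwards [nhdsWithin_le_nhds (hopen.mem_nhds hmem),
        self_mem_nhdsWithin] with p hp hps
      obtain ⟨hp1, hp2, hp3⟩ := hp
      have hpγ : 0 ≤ p.1 := hps.1
      have hpa : 0 < p.2 := by linarith
      rcases eq_or_lt_of_le hpγ with hq | hq
      · simp only [ell, if_neg (not_lt.mpr hpa.le), if_neg hpa.ne', ← hq, if_pos rfl]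
        exact hC
      · simp only [ell, if_neg (not_lt.mpr hpa.le), if_neg hpa.ne', if_neg hq.ne']
        rw [gt_iff_lt, ENNReal.lt_ofReal_iff_toReal_lt hC.ne]
        -- show r < p.1 - p.2 + p.2 * log (p.2 / p.1)
        have hlog : L ≤ Real.log (p.2 / p.1) := by
          have hgt : Real.exp L ≤ p.2 / p.1 := by
            rw [le_div_iff₀ hq]
            have h1 : p.1 * Real.exp L < δ * Real.exp L :=
              mul_lt_mul_of_pos_right hp1 (Real.exp_pos L)
            have h2 : δ * Real.exp L = a₀ / 2 := by
              rw [hδ, mul_assoc, ← Real.exp_add, neg_add_cancel, Real.exp_zero, mul_one]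
            nlinarith
          calc L = Real.log (Real.exp L) := (Real.log_exp L).symm
          _ ≤ Real.log (p.2 / p.1) := Real.log_le_log (Real.exp_pos L) hgt
        have hmul : |r| + a₀ + 2 ≤ p.2 * Real.log (p.2 / p.1) := by
          have h0L : (0:ℝ) ≤ Real.log (p.2 / p.1) := le_trans hL0 hlog
          have : (a₀ / 2) * L ≤ p.2 * Real.log (p.2 / p.1) :=
            mul_le_mul hp2.le hlog hL0 hpa.le |>.trans_eq rfl |>.trans (le_refl _)
          have hLeq : (a₀ / 2) * L = |r| + a₀ + 2 := by
            rw [hL]; field_simp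
          linarith
        have habs : r ≤ |r| := le_abs_self r
        calc r < |r| + 1 := by linarith
        _ ≤ p.1 - p.2 + p.2 * Real.log (p.2 / p.1) := by nlinarith
    · -- γ₀ > 0, a₀ > 0 : continuity point
      rw [ellG_eq γ₀ a₀ hγ₀' ha₀.le] at hc
      have hcont : ContinuousAt (fun p : ℝ × ℝ => ENNReal.ofReal (ellG p)) (γ₀, a₀) :=
        ENNReal.continuous_ofReal.continuousAt.comp (ellG_continuousAt γ₀ a₀ hγ₀')
      filter_upwards [nhdsWithin_le_nhds (hcont.eventually_mem (Ioi_mem_nhds hc))] with p hp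
      exact lt_of_lt_of_le hp (ofReal_ellG_le p.1 p.2)
  case inr.inl =>
    -- a₀ = 0
    subst ha₀
    rcases eq_or_lt_of_le hγ₀ with hγ₀' | hγ₀'
    · -- γ₀ = 0 : ell 0 0 = 0, trivial
      exfalso
      have : ell γ₀ 0 = 0 := by simp [ell, ← hγ₀']
      rw [this] at hc
      exact (not_lt_of_ge (zero_le (a := c))) hc
    · rw [ellG_eq γ₀ 0 hγ₀' le_rfl] at hc
      have hcont : ContinuousAt (fun p : ℝ × ℝ => ENNReal.ofReal (ellG p)) (γ₀, 0) :=
        ENNReal.continuous_ofReal.continuousAt.comp (ellG_continuousAt γ₀ 0 hγ₀')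
      filter_upwards [nhdsWithin_le_nhds (hcont.eventually_mem (Ioi_mem_nhds hc))] with p hp
      exact lt_of_lt_of_le hp (ofReal_ellG_le p.1 p.2)

theorem stmt17 (R : Set ℝ) (hR : R.Nonempty) (hRc : IsClosed R) (hR0 : R ⊆ Set.Ici 0)
    (ψ : ℝ → ℝ≥0∞) (hψ : LowerSemicontinuous ψ) :
    LowerSemicontinuous (fun a : ℝ => ⨅ γ ∈ R, (ell γ a + ψ γ)) := by
  set I : ℝ → ℝ≥0∞ := fun a => ⨅ γ ∈ R, (ell γ a + ψ γ) with hI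
  intro a₀ c hc
  by_contra hcon
  rw [Filter.not_eventually] at hcon
  obtain ⟨c', hcc', hc'I⟩ := exists_between hc
  have hc'T : c' ≠ ⊤ := fun h => absurd (h ▸ hc'I) (not_lt_of_ge le_top)
  set M : ℝ := |a₀| + 1 with hM
  obtain ⟨K, hK⟩ := ell_coercive M c'.toReal (by positivity)
  -- extract a sequence aₙ → a₀ with I aₙ ≤ c
  obtain ⟨a, hat, han⟩ := Filter.exists_seq_forall_of_frequently hcon
  have han' : ∀ n, I (a n) < c' := fun n => lt_of_le_of_lt (not_lt.mp (han n)) hcc'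
  -- witnesses γₙ ∈ R
  have hwit : ∀ n, ∃ γ ∈ R, ell γ (a n) + ψ γ < c' := by
    intro n
    have := han' n
    rw [hI] at this
    simpa [iInf_lt_iff] using this
  choose γ hγR hγlt using hwit
  -- eventually a n ≤ M
  have haM : ∀ᶠ n in atTop, a n ≤ M := by
    have hlt : a₀ < M := by
      have := le_abs_self a₀; linarith
    have hev : ∀ᶠ x in 𝓝 a₀, x ≤ M := by
      filter_upwards [Iio_mem_nhds hlt] with x hx
      exact le_of_lt hx
    exact hat.eventually hev
  obtain ⟨N, hN⟩ := eventually_atTop.mp haM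
  -- shifted sequences
  set a' : ℕ → ℝ := fun n => a (n + N) with ha'
  set γ' : ℕ → ℝ := fun n => γ (n + N) with hγ'
  have ha't : Filter.Tendsto a' atTop (𝓝 a₀) := hat.comp (tendsto_add_atTop_nat N)
  have ha'M : ∀ n, a' n ≤ M := fun n => hN (n + N) (Nat.le_add_left N n)
  have hγ'R : ∀ n, γ' n ∈ R := fun n => hγR (n + N)
  have hγ'lt : ∀ n, ell (γ' n) (a' n) + ψ (γ' n) < c' := fun n => hγlt (n + N)
  have hγ'K : ∀ n, γ' n ≤ K := by
    intro n
    by_contra hcon2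
    have h1 : ENNReal.ofReal c'.toReal ≤ ell (γ' n) (a' n) :=
      hK (γ' n) (le_of_lt (not_le.mp hcon2)) (a' n) (ha'M n)
    rw [ENNReal.ofReal_toReal hc'T] at h1
    exact absurd (lt_of_le_of_lt (le_trans h1 le_self_add) (hγ'lt n)) (lt_irrefl c')
  -- bounded sequence: extract convergent subsequence
  have hmem : ∀ n, γ' n ∈ Set.Icc (0:ℝ) K := fun n => ⟨hR0 (hγ'R n), hγ'K n⟩
  obtain ⟨γ₁, hγ₁cl, φ, hφ, hγ₁t⟩ :=
    tendsto_subseq_of_bounded (Metric.isBounded_Icc 0 K) hmem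
  have hγ₁R : γ₁ ∈ R := hRc.mem_of_tendsto hγ₁t (Filter.Eventually.of_forall fun n => hγ'R (φ n))
  have hγ₁0 : 0 ≤ γ₁ := hR0 hγ₁R
  -- the sequence of pairs converges within the set
  set s : Set (ℝ × ℝ) := Set.Ici (0:ℝ) ×ˢ (Set.univ : Set ℝ) with hs
  set p : ℕ → ℝ × ℝ := fun n => (γ' (φ n), a' (φ n)) with hp
  have hpt : Filter.Tendsto p atTop (𝓝[s] (γ₁, a₀)) := by
    apply tendsto_nhdsWithin_of_tendsto_nhds_of_eventually_within
    · exact hγ₁t.prodMk_nhds (ha't.comp hφ.tendsto_atTop)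
    · exact Filter.Eventually.of_forall fun n => ⟨hR0 (hγ'R (φ n)), Set.mem_univ _⟩
  -- joint lower semicontinuity of the summand
  have hψ' : LowerSemicontinuousWithinAt (fun q : ℝ × ℝ => ψ q.1) s (γ₁, a₀) := by
    intro y hy
    have := hψ γ₁ y hy
    exact nhdsWithin_le_nhds ((continuous_fst.tendsto ((γ₁ : ℝ), (a₀ : ℝ))).eventually this)
  have hsum : LowerSemicontinuousWithinAt (fun q : ℝ × ℝ => ell q.1 q.2 + ψ q.1) s (γ₁, a₀) :=
    (ell_lscWithin γ₁ a₀ hγ₁0).add hψ'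
  have hc'g : c' < ell γ₁ a₀ + ψ γ₁ := by
    refine lt_of_lt_of_le hc'I ?_
    exact iInf₂_le γ₁ hγ₁R
  have hev : ∀ᶠ n in atTop, c' < ell (p n).1 (p n).2 + ψ (p n).1 :=
    hpt.eventually (hsum c' hc'g)
  obtain ⟨n, hn⟩ := hev.exists
  exact absurd (hγ'lt (φ n)) (not_lt_of_ge (le_of_lt hn))
end
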